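/- arXiv:1006.5295 — 5 statements merged into one kernel-verified Lean document; each statement's English description precedes it below -/
import Mathlib

section
/- Pointwise constant rank criterion: Let f : U ⊆ C^m → C^p be a tactile map on an m-adic neighbourhood U of 0, induced by substitution into a power series vector, so that each tangent map T_a f is k[[x]]-linear. If in(im(T_a f)) = in(im(T_0 f)) for all a ∈ U, then f has pointwise constant rank at 0 with respect to Δ(T_0 f): for every a ∈ U one has the direct sum decomposition C^p = im(T_a f) ⊕ Δ(T_0 f), where Δ(T_0 f) = {b ∈ C^p : supp(b) ∩ supp(in(im(T_0 f))) = ∅}. -/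
/- Pointwise constant rank criterion for tactile maps. -/

noncomputable section

open MvPowerSeries

variable {k : Type} [Field k]

/-- Substitution of power series `g s` (of positive order) for the variables of `F`. -/
def substPS {σ τ : Type} (F : MvPowerSeries σ k) (g : σ → MvPowerSeries τ k) :
    MvPowerSeries τ k :=
  (fun β => ∑ᶠ d : σ →₀ ℕ,
    MvPowerSeries.coeff d F *
      MvPowerSeries.coeff β (d.prod fun s e => (g s) ^ e) : (τ →₀ ℕ) → k)

/-- The formal partial derivative of a multivariate power series. -/
def pderivPS {σ : Type} [DecidableEq σ] (s : σ) (F : MvPowerSeries σ k) :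
    MvPowerSeries σ k :=
  (fun d => ((d s : ℕ) + 1 : k) *
    MvPowerSeries.coeff (d + Finsupp.single s 1) F : (σ →₀ ℕ) → k)

/-- Value of the positive linear form given by the weights `w` on a multi-exponent. -/
def Lval {n : ℕ} (w : Fin n → ℝ) (d : Fin n →₀ ℕ) : ℝ :=
  d.sum fun i e => w i * (e : ℝ)

/-- Lexicographic comparison of multi-exponents. -/
def lexLt {n : ℕ} (α β : Fin n →₀ ℕ) : Prop :=
  ∃ i, α i < β i ∧ ∀ j, j < i → α j = β j

/-- The module order on the indices `(α, j)` of monomial vectors. -/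
def modLt {n p : ℕ} (w : Fin n → ℝ) (x y : (Fin n →₀ ℕ) × Fin p) : Prop :=
  Lval w x.1 < Lval w y.1 ∨
    (Lval w x.1 = Lval w y.1 ∧ (lexLt x.1 y.1 ∨ (x.1 = y.1 ∧ x.2 < y.2)))

/-- Support of a vector of power series. -/
def suppV {n p : ℕ} (a : Fin p → MvPowerSeries (Fin n) k) : Set ((Fin n →₀ ℕ) × Fin p) :=
  {ι | MvPowerSeries.coeff ι.1 (a ι.2) ≠ 0}

/-- `ι` is the initial index of `a`. -/
def IsInitial {n p : ℕ} (w : Fin n → ℝ) (a : Fin p → MvPowerSeries (Fin n) k)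
    (ι : (Fin n →₀ ℕ) × Fin p) : Prop :=
  ι ∈ suppV a ∧ ∀ κ ∈ suppV a, κ ≠ ι → modLt w ι κ

/-- The monomial vector `x^{(α,j)}`. -/
def monVec {n p : ℕ} (ι : (Fin n →₀ ℕ) × Fin p) : Fin p → MvPowerSeries (Fin n) k :=
  fun j => if j = ι.2 then MvPowerSeries.monomial ι.1 1 else 0

/-- The initial module of a submodule `M ⊆ k[[x]]^p`. -/
def initialModule {n p : ℕ} (w : Fin n → ℝ)
    (M : Submodule (MvPowerSeries (Fin n) k) (Fin p → MvPowerSeries (Fin n) k)) :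
    Submodule (MvPowerSeries (Fin n) k) (Fin p → MvPowerSeries (Fin n) k) :=
  Submodule.span _ {v | ∃ a ∈ M, ∃ ι, IsInitial w a ι ∧ v = monVec ι}

/-- The support of a monomial submodule. -/
def suppSet {n p : ℕ}
    (N : Submodule (MvPowerSeries (Fin n) k) (Fin p → MvPowerSeries (Fin n) k)) :
    Set ((Fin n →₀ ℕ) × Fin p) :=
  {ι | monVec ι ∈ N}

/-- The `m`-adic neighbourhood `m^l · C^q` of `0`. -/
def nbhd (k : Type) [Field k] (n q l : ℕ) : Set (Fin q → MvPowerSeries (Fin n) k) :=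
  {c | ∀ (j : Fin q) (d : Fin n →₀ ℕ),
    (d.sum fun _ e => e) < l → MvPowerSeries.coeff d (c j) = 0}

/-- The family of partial derivative vectors `∂_{y_i} g(x, a)` of the tactile map induced by
`g ∈ k[[x,y]]^p`.  The tangent map of the tactile map at `a` is `v ↦ Σ_i v_i • (tacD g a i)`,
which is `k[[x]]`-linear. -/
def tacD {n m p : ℕ} (g : Fin p → MvPowerSeries (Fin n ⊕ Fin m) k)
    (a : Fin m → MvPowerSeries (Fin n) k) (i : Fin m) : Fin p → MvPowerSeries (Fin n) k :=
  fun j => substPS (pderivPS (Sum.inr i) (g j)) (Sum.elim (fun s => MvPowerSeries.X s) a)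


namespace PCR

instance (n : ℕ) : WellFoundedLT (Fin n) := Finite.to_wellFoundedLT

variable {n p : ℕ}

/-- The linear "key" of an index. -/
def key {n p : ℕ} (w : Fin n → ℝ) (ι : (Fin n →₀ ℕ) × Fin p) :
    ℝ ×ₗ (Lex (Fin n → ℕ) ×ₗ Fin p) :=
  toLex (Lval w ι.1, toLex (toLex (⇑ι.1), ι.2))

lemma key_injective (w : Fin n → ℝ) :
    Function.Injective (key (p := p) w) := by
  intro ι κ h
  have h2 := congrArg (fun x => (ofLex x).2) h
  simp only [key, ofLex_toLex] at h2
  have h3 := congrArg (fun x => (ofLex x).1) h2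
  have h4 := congrArg (fun x => (ofLex x).2) h2
  simp only [ofLex_toLex] at h3 h4
  have : ι.1 = κ.1 := DFunLike.coe_injective h3
  exact Prod.ext this h4

lemma lexLt_iff (α β : Fin n →₀ ℕ) :
    lexLt α β ↔ toLex (⇑α) < toLex (⇑β) := by
  constructor
  · rintro ⟨i, h1, h2⟩
    exact ⟨i, fun j hj => h2 j hj, h1⟩
  · rintro ⟨i, h2, h1⟩
    exact ⟨i, h1, fun j hj => h2 j hj⟩

lemma modLt_iff_key_lt (w : Fin n → ℝ) (ι κ : (Fin n →₀ ℕ) × Fin p) :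
    modLt w ι κ ↔ key w ι < key w κ := by
  rw [modLt, key, key, Prod.Lex.lt_iff]
  simp only [ofLex_toLex]
  rw [Prod.Lex.lt_iff]
  simp only [ofLex_toLex]
  rw [lexLt_iff]
  constructor
  · rintro (h | ⟨h1, h2 | ⟨h2, h3⟩⟩)
    · exact Or.inl h
    · exact Or.inr ⟨h1, Or.inl h2⟩
    · exact Or.inr ⟨h1, Or.inr ⟨congrArg _ (congrArg _ h2), h3⟩⟩
  · rintro (h | ⟨h1, h2 | ⟨h2, h3⟩⟩)
    · exact Or.inl h
    · exact Or.inr ⟨h1, Or.inl h2⟩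
    · exact Or.inr ⟨h1, Or.inr ⟨DFunLike.coe_injective h2, h3⟩⟩


lemma Lval_eq_sum (w : Fin n → ℝ) (d : Fin n →₀ ℕ) :
    Lval w d = ∑ i, w i * (d i : ℝ) := by
  rw [Lval, Finsupp.sum_fintype]
  intro i; simp

lemma Lval_nonneg {w : Fin n → ℝ} (hw : ∀ i, 0 < w i) (d : Fin n →₀ ℕ) :
    0 ≤ Lval w d := by
  rw [Lval_eq_sum]
  exact Finset.sum_nonneg fun i _ => mul_nonneg (hw i).le (by positivity)

lemma Lval_add (w : Fin n → ℝ) (d e : Fin n →₀ ℕ) :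
    Lval w (d + e) = Lval w d + Lval w e := by
  simp only [Lval_eq_sum, Finsupp.add_apply, Nat.cast_add, mul_add]
  rw [Finset.sum_add_distrib]

lemma single_le_Lval {w : Fin n → ℝ} (hw : ∀ i, 0 < w i) (d : Fin n →₀ ℕ) (i : Fin n) :
    w i * (d i : ℝ) ≤ Lval w d := by
  rw [Lval_eq_sum]
  exact Finset.single_le_sum (f := fun j => w j * (d j : ℝ))
    (fun j _ => mul_nonneg (hw j).le (Nat.cast_nonneg _)) (Finset.mem_univ i)

lemma finite_Lval_le {w : Fin n → ℝ} (hw : ∀ i, 0 < w i) (B : ℝ) :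
    {ι : (Fin n →₀ ℕ) × Fin p | Lval w ι.1 ≤ B}.Finite := by
  classical
  set D : Fin n →₀ ℕ := Finsupp.equivFunOnFinite.symm (fun i => ⌊B / w i⌋₊) with hD
  have : {ι : (Fin n →₀ ℕ) × Fin p | Lval w ι.1 ≤ B} ⊆ Set.Iic D ×ˢ Set.univ := by
    rintro ⟨d, j⟩ h
    refine ⟨?_, trivial⟩
    intro i
    have h1 : w i * (d i : ℝ) ≤ B := le_trans (single_le_Lval hw d i) h
    have h2 : (d i : ℝ) ≤ B / w i := (le_div_iff₀ (hw i)).mpr (by linarith [h1])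
    have : d i ≤ ⌊B / w i⌋₊ := Nat.le_floor h2
    simpa [hD] using this
  exact Set.Finite.subset ((Set.finite_Iic D).prod Set.finite_univ) this

/-- Every nonempty set of indices has a `key`-minimum. -/
lemma exists_key_min {w : Fin n → ℝ} (hw : ∀ i, 0 < w i)
    (T : Set ((Fin n →₀ ℕ) × Fin p)) (hT : T.Nonempty) :
    ∃ ι ∈ T, ∀ κ ∈ T, key w ι ≤ key w κ := by
  classical
  obtain ⟨ι₀, hι₀⟩ := hT
  have hfin : (T ∩ {ι | Lval w ι.1 ≤ Lval w ι₀.1}).Finite :=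
    (finite_Lval_le hw _).subset Set.inter_subset_right
  have hne : (T ∩ {ι | Lval w ι.1 ≤ Lval w ι₀.1}).Nonempty := ⟨ι₀, hι₀, le_refl (Lval w ι₀.1)⟩
  obtain ⟨ι, hι, hmin⟩ := Set.exists_min_image _ (key w) hfin hne
  refine ⟨ι, hι.1, fun κ hκ => ?_⟩
  by_cases h : Lval w κ.1 ≤ Lval w ι₀.1
  · exact hmin κ ⟨hκ, h⟩
  · have h1 : Lval w ι.1 ≤ Lval w ι₀.1 := hι.2
    have h2 : Lval w ι.1 < Lval w κ.1 := lt_of_le_of_lt h1 (lt_of_not_ge h)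
    exact le_of_lt (by rw [key, key, Prod.Lex.lt_iff]; exact Or.inl h2)


/-! ### Initial indices -/

lemma isInitial_iff {w : Fin n → ℝ} {a : Fin p → MvPowerSeries (Fin n) k}
    {ι : (Fin n →₀ ℕ) × Fin p} :
    IsInitial w a ι ↔ ι ∈ suppV a ∧ ∀ κ ∈ suppV a, key w ι ≤ key w κ := by
  constructor
  · rintro ⟨h1, h2⟩
    refine ⟨h1, fun κ hκ => ?_⟩
    by_cases h : κ = ι
    · exact le_of_eq (congrArg _ h.symm)
    · exact le_of_lt ((modLt_iff_key_lt w ι κ).mp (h2 κ hκ h))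
  · rintro ⟨h1, h2⟩
    refine ⟨h1, fun κ hκ h => ?_⟩
    rw [modLt_iff_key_lt]
    rcases lt_or_eq_of_le (h2 κ hκ) with h' | h'
    · exact h'
    · exact absurd (key_injective w h'.symm) h

lemma exists_isInitial {w : Fin n → ℝ} (hw : ∀ i, 0 < w i)
    {a : Fin p → MvPowerSeries (Fin n) k} (ha : a ≠ 0) :
    ∃ ι, IsInitial w a ι := by
  have hne : (suppV a).Nonempty := by
    by_contra h
    apply ha
    rw [Set.not_nonempty_iff_eq_empty] at h
    funext j
    ext d
    by_contra hc
    exact absurd (Set.eq_empty_iff_forall_notMem.mp h (d, j) hc) not_false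
  obtain ⟨ι, hι, hmin⟩ := exists_key_min hw _ hne
  exact ⟨ι, isInitial_iff.mpr ⟨hι, hmin⟩⟩

lemma isInitial_unique {w : Fin n → ℝ} {a : Fin p → MvPowerSeries (Fin n) k}
    {ι κ : (Fin n →₀ ℕ) × Fin p} (h1 : IsInitial w a ι) (h2 : IsInitial w a κ) : ι = κ := by
  rw [isInitial_iff] at h1 h2
  exact key_injective w (le_antisymm (h1.2 κ h2.1) (h2.2 ι h1.1))

/-! ### Monomial scaling -/

lemma coeff_monomial_smul (γ : Fin n →₀ ℕ) (a : Fin p → MvPowerSeries (Fin n) k)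
    (β : Fin n →₀ ℕ) (j : Fin p) :
    MvPowerSeries.coeff β (((MvPowerSeries.monomial γ 1 : MvPowerSeries (Fin n) k) • a) j) =
      if γ ≤ β then MvPowerSeries.coeff (β - γ) (a j) else 0 := by
  have : ((MvPowerSeries.monomial γ 1 : MvPowerSeries (Fin n) k) • a) j
      = (MvPowerSeries.monomial γ 1 : MvPowerSeries (Fin n) k) * a j := rfl
  rw [this, MvPowerSeries.coeff_monomial_mul]
  split <;> simp

lemma mem_suppV_monomial_smul {γ : Fin n →₀ ℕ} {a : Fin p → MvPowerSeries (Fin n) k}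
    {κ : (Fin n →₀ ℕ) × Fin p}
    (h : κ ∈ suppV ((MvPowerSeries.monomial γ 1 : MvPowerSeries (Fin n) k) • a)) :
    γ ≤ κ.1 ∧ (κ.1 - γ, κ.2) ∈ suppV a := by
  have := h
  rw [suppV, Set.mem_setOf_eq, coeff_monomial_smul] at this
  by_cases hle : γ ≤ κ.1
  · rw [if_pos hle] at this
    exact ⟨hle, this⟩
  · rw [if_neg hle] at this
    exact absurd rfl this

lemma modLt_add {w : Fin n → ℝ} (γ : Fin n →₀ ℕ) {ι κ : (Fin n →₀ ℕ) × Fin p}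
    (h : modLt w ι κ) : modLt w (γ + ι.1, ι.2) (γ + κ.1, κ.2) := by
  rcases h with h | ⟨h1, h2 | ⟨h2, h3⟩⟩
  · exact Or.inl (by simp only [Lval_add]; linarith)
  · refine Or.inr ⟨by simp only [Lval_add, h1], Or.inl ?_⟩
    obtain ⟨i, hi1, hi2⟩ := h2
    exact ⟨i, by simpa using hi1, fun j hj => by simpa using hi2 j hj⟩
  · exact Or.inr ⟨by simp only [Lval_add, h2], Or.inr ⟨by rw [h2], h3⟩⟩

lemma isInitial_monomial_smul {w : Fin n → ℝ} (γ : Fin n →₀ ℕ)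
    {a : Fin p → MvPowerSeries (Fin n) k} {ι : (Fin n →₀ ℕ) × Fin p}
    (h : IsInitial w a ι) :
    IsInitial w ((MvPowerSeries.monomial γ 1 : MvPowerSeries (Fin n) k) • a)
      (γ + ι.1, ι.2) := by
  obtain ⟨h1, h2⟩ := h
  constructor
  · rw [suppV, Set.mem_setOf_eq, coeff_monomial_smul, if_pos le_self_add]
    simpa [add_tsub_cancel_left, suppV] using h1
  · rintro κ hκ hne
    obtain ⟨hle, hmem⟩ := mem_suppV_monomial_smul hκ
    have hκeq : κ = (γ + (κ.1 - γ), κ.2) := by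
      rw [add_tsub_cancel_of_le hle]
    by_cases heq : (κ.1 - γ, κ.2) = ι
    · exfalso
      apply hne
      rw [hκeq, ← heq]
    · have := modLt_add (w := w) γ (h2 _ hmem heq)
      rw [← hκeq] at this
      exact this

lemma coeff_monomial_smul_self (γ : Fin n →₀ ℕ) (a : Fin p → MvPowerSeries (Fin n) k)
    (ι : (Fin n →₀ ℕ) × Fin p) :
    MvPowerSeries.coeff (γ + ι.1)
      (((MvPowerSeries.monomial γ 1 : MvPowerSeries (Fin n) k) • a) ι.2) =
      MvPowerSeries.coeff ι.1 (a ι.2) := by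
  rw [coeff_monomial_smul, if_pos le_self_add, add_tsub_cancel_left]


/-! ### The initial module and its support -/

lemma mem_suppSet_of_isInitial {w : Fin n → ℝ}
    {M : Submodule (MvPowerSeries (Fin n) k) (Fin p → MvPowerSeries (Fin n) k)}
    {a : Fin p → MvPowerSeries (Fin n) k} {ι : (Fin n →₀ ℕ) × Fin p}
    (ha : a ∈ M) (hι : IsInitial w a ι) :
    ι ∈ suppSet (initialModule w M) :=
  Submodule.subset_span ⟨a, ha, ι, hι, rfl⟩

lemma monVec_apply (ι : (Fin n →₀ ℕ) × Fin p) (j : Fin p) :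
    (monVec ι : Fin p → MvPowerSeries (Fin n) k) j =
      if j = ι.2 then MvPowerSeries.monomial ι.1 1 else 0 := rfl

lemma exists_isInitial_le_of_mem_suppSet {w : Fin n → ℝ}
    {M : Submodule (MvPowerSeries (Fin n) k) (Fin p → MvPowerSeries (Fin n) k)}
    {ι : (Fin n →₀ ℕ) × Fin p} (h : ι ∈ suppSet (initialModule w M)) :
    ∃ a ∈ M, ∃ κ : (Fin n →₀ ℕ) × Fin p, IsInitial w a κ ∧ κ.2 = ι.2 ∧ κ.1 ≤ ι.1 := by
  classical
  rw [suppSet, Set.mem_setOf_eq, initialModule] at h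
  rw [Submodule.mem_span_set] at h
  obtain ⟨c, hsupp, hsum⟩ := h
  have h1 : MvPowerSeries.coeff ι.1 ((monVec ι : Fin p → MvPowerSeries (Fin n) k) ι.2)
      = 1 := by
    rw [monVec_apply, if_pos rfl, MvPowerSeries.coeff_monomial_same]
  rw [← hsum] at h1
  have h2 : (c.sum fun v r => r • v) ι.2 = ∑ v ∈ c.support, (c v • v) ι.2 := by
    rw [Finsupp.sum]
    exact Finset.sum_apply _ _ _
  rw [h2, map_sum] at h1
  have h3 : ∃ v ∈ c.support,
      MvPowerSeries.coeff ι.1 ((c v • v) ι.2) ≠ 0 := by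
    by_contra hcon
    push_neg at hcon
    rw [Finset.sum_eq_zero hcon] at h1
    exact one_ne_zero h1.symm
  obtain ⟨v, hv, hvne⟩ := h3
  obtain ⟨a, haM, κ, hκ, rfl⟩ := hsupp hv
  rw [Pi.smul_apply, smul_eq_mul, monVec_apply] at hvne
  by_cases hj : ι.2 = κ.2
  · rw [if_pos hj, MvPowerSeries.coeff_mul_monomial] at hvne
    by_cases hle : κ.1 ≤ ι.1
    · exact ⟨a, haM, κ, hκ, hj.symm, hle⟩
    · rw [if_neg hle] at hvne
      exact absurd rfl hvne
  · rw [if_neg hj, mul_zero, map_zero] at hvne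
    exact absurd rfl hvne

lemma exists_normalized {w : Fin n → ℝ}
    {M : Submodule (MvPowerSeries (Fin n) k) (Fin p → MvPowerSeries (Fin n) k)}
    {ι : (Fin n →₀ ℕ) × Fin p} (h : ι ∈ suppSet (initialModule w M)) :
    ∃ u ∈ M, IsInitial w u ι ∧ MvPowerSeries.coeff ι.1 (u ι.2) = 1 := by
  obtain ⟨a, haM, κ, hκ, hj, hle⟩ := exists_isInitial_le_of_mem_suppSet h
  set u₀ : Fin p → MvPowerSeries (Fin n) k :=
    (MvPowerSeries.monomial (ι.1 - κ.1) 1 : MvPowerSeries (Fin n) k) • a with hu₀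
  have hini : IsInitial w u₀ ι := by
    have := isInitial_monomial_smul (w := w) (ι.1 - κ.1) hκ
    rwa [tsub_add_cancel_of_le hle, hj, Prod.mk.eta] at this
  have hc : MvPowerSeries.coeff ι.1 (u₀ ι.2) ≠ 0 := hini.1
  set c : MvPowerSeries (Fin n) k :=
    MvPowerSeries.C (MvPowerSeries.coeff ι.1 (u₀ ι.2))⁻¹ with hcdef
  refine ⟨c • u₀, Submodule.smul_mem _ _ (Submodule.smul_mem _ _ haM), ?_, ?_⟩
  · have hcoeff : ∀ (β : Fin n →₀ ℕ) (j : Fin p),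
        MvPowerSeries.coeff β ((c • u₀) j) =
          (MvPowerSeries.coeff ι.1 (u₀ ι.2))⁻¹ * MvPowerSeries.coeff β (u₀ j) := by
      intro β j
      rw [Pi.smul_apply, smul_eq_mul, hcdef, MvPowerSeries.coeff_C_mul]
    have hsupp : suppV (c • u₀) = suppV u₀ := by
      ext ⟨β, j⟩
      simp only [suppV, Set.mem_setOf_eq, hcoeff]
      constructor
      · intro hne h0
        exact hne (by rw [h0, mul_zero])
      · intro hne
        exact mul_ne_zero (inv_ne_zero hc) hne
    refine ⟨?_, ?_⟩
    · show ι ∈ suppV (c • u₀)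
      rw [hsupp]
      exact hini.1
    · intro κ' hκ' hne
      exact hini.2 κ' (hsupp ▸ hκ') hne
  · rw [Pi.smul_apply, smul_eq_mul, hcdef, MvPowerSeries.coeff_C_mul]
    exact inv_mul_cancel₀ hc

lemma suppSet_upward {w : Fin n → ℝ}
    {N : Submodule (MvPowerSeries (Fin n) k) (Fin p → MvPowerSeries (Fin n) k)}
    {ι : (Fin n →₀ ℕ) × Fin p} (h : ι ∈ suppSet N) (γ : Fin n →₀ ℕ) :
    (γ + ι.1, ι.2) ∈ suppSet N := by
  have key : (monVec (γ + ι.1, ι.2) : Fin p → MvPowerSeries (Fin n) k) =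
      (MvPowerSeries.monomial γ 1 : MvPowerSeries (Fin n) k) • monVec ι := by
    funext j
    rw [Pi.smul_apply, smul_eq_mul, monVec_apply, monVec_apply]
    by_cases hj : j = ι.2
    · rw [if_pos hj, if_pos hj, MvPowerSeries.monomial_mul_monomial, one_mul]
    · rw [if_neg hj, if_neg hj, mul_zero]
  rw [suppSet, Set.mem_setOf_eq, key]
  exact Submodule.smul_mem _ _ h


/-! ### Dickson-type finite basis -/

lemma exists_finset_basis (S : Set ((Fin n →₀ ℕ) × Fin p)) :
    ∃ B : Finset ((Fin n →₀ ℕ) × Fin p), ↑B ⊆ S ∧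
      ∀ ι ∈ S, ∃ κ ∈ B, κ.2 = ι.2 ∧ κ.1 ≤ ι.1 := by
  classical
  set Sj : Fin p → Set (Fin n →₀ ℕ) := fun j => {α | (α, j) ∈ S} with hSj
  set Min : Fin p → Set (Fin n →₀ ℕ) :=
    fun j => {α ∈ Sj j | ∀ β ∈ Sj j, ¬ β < α} with hMin
  have hanti : ∀ j, IsAntichain (· ≤ ·) (Min j) := by
    intro j α hα β hβ hne hle
    exact hβ.2 α hα.1 (lt_of_le_of_ne hle hne)
  have hfin : ∀ j, (Min j).Finite := fun j =>
    (hanti j).finite_of_partiallyWellOrderedOn ((Set.isPWO_of_wellQuasiOrderedLE (Min j)))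
  have hcover : ∀ j, ∀ α ∈ Sj j, ∃ β ∈ Min j, β ≤ α := by
    intro j α hα
    have hwf : {β ∈ Sj j | β ≤ α}.IsWF := ((Set.isPWO_of_wellQuasiOrderedLE _).isWF)
    have hne : {β ∈ Sj j | β ≤ α}.Nonempty := ⟨α, hα, le_refl α⟩
    refine ⟨hwf.min hne, ⟨(hwf.min_mem hne).1, ?_⟩, (hwf.min_mem hne).2⟩
    intro β hβ hlt
    exact hwf.not_lt_min hne ⟨hβ, le_trans hlt.le (hwf.min_mem hne).2⟩ hlt
  have hBfin : (⋃ j : Fin p, (fun α => (α, j)) '' Min j).Finite :=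
    Set.finite_iUnion fun j => (hfin j).image _
  refine ⟨hBfin.toFinset, ?_, ?_⟩
  · intro ι hι
    simp only [Finset.mem_coe, Set.Finite.mem_toFinset] at hι
    obtain ⟨j, α, hα, rfl⟩ := by simpa using hι
    exact hα.1
  · rintro ⟨α, j⟩ hι
    obtain ⟨β, hβ, hle⟩ := hcover j α hι
    refine ⟨(β, j), ?_, rfl, hle⟩
    rw [Set.Finite.mem_toFinset]
    exact Set.mem_iUnion.mpr ⟨j, β, hβ, rfl⟩


/-! ### More order helpers -/

lemma Lval_le_of_key_le {w : Fin n → ℝ} {ι κ : (Fin n →₀ ℕ) × Fin p}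
    (h : key w ι ≤ key w κ) : Lval w ι.1 ≤ Lval w κ.1 := by
  rw [key, key, Prod.Lex.le_iff] at h
  rcases h with h | ⟨h, _⟩
  · exact h.le
  · exact h.le

lemma key_lt_of_Lval_lt {w : Fin n → ℝ} {ι κ : (Fin n →₀ ℕ) × Fin p}
    (h : Lval w ι.1 < Lval w κ.1) : key w ι < key w κ := by
  rw [key, key, Prod.Lex.lt_iff]
  exact Or.inl h

/-- Chosen minimum of a nonempty set of indices. -/
def minIdx {w : Fin n → ℝ} (hw : ∀ i, 0 < w i)
    (T : Set ((Fin n →₀ ℕ) × Fin p)) (hT : T.Nonempty) : (Fin n →₀ ℕ) × Fin p :=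
  (exists_key_min hw T hT).choose

lemma minIdx_mem {w : Fin n → ℝ} (hw : ∀ i, 0 < w i)
    (T : Set ((Fin n →₀ ℕ) × Fin p)) (hT : T.Nonempty) : minIdx hw T hT ∈ T :=
  (exists_key_min hw T hT).choose_spec.1

lemma minIdx_min {w : Fin n → ℝ} (hw : ∀ i, 0 < w i)
    (T : Set ((Fin n →₀ ℕ) × Fin p)) (hT : T.Nonempty) :
    ∀ κ ∈ T, key w (minIdx hw T hT) ≤ key w κ :=
  (exists_key_min hw T hT).choose_spec.2

lemma mem_suppV_sub {a b : Fin p → MvPowerSeries (Fin n) k} {κ : (Fin n →₀ ℕ) × Fin p}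
    (h : κ ∈ suppV (a - b)) : κ ∈ suppV a ∪ suppV b := by
  rw [suppV, Set.mem_setOf_eq] at h
  by_contra hcon
  rw [Set.mem_union] at hcon
  push_neg at hcon
  obtain ⟨h1, h2⟩ := hcon
  rw [suppV, Set.mem_setOf_eq, not_not] at h1 h2
  apply h
  rw [Pi.sub_apply, map_sub, h1, h2, sub_zero]

/-- Support of an initial element lies (weakly) above its initial index. -/
lemma key_le_of_mem_suppV {w : Fin n → ℝ} {a : Fin p → MvPowerSeries (Fin n) k}
    {ι κ : (Fin n →₀ ℕ) × Fin p} (hι : IsInitial w a ι) (hκ : κ ∈ suppV a) :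
    key w ι ≤ key w κ := (isInitial_iff.mp hι).2 κ hκ

lemma suppV_C_smul {c : k} {a : Fin p → MvPowerSeries (Fin n) k}
    {κ : (Fin n →₀ ℕ) × Fin p}
    (h : κ ∈ suppV ((MvPowerSeries.C c : MvPowerSeries (Fin n) k) • a)) :
    κ ∈ suppV a := by
  rw [suppV, Set.mem_setOf_eq] at h ⊢
  intro h0
  apply h
  rw [Pi.smul_apply, smul_eq_mul, MvPowerSeries.coeff_C_mul, h0, mul_zero]


/-! ### The division theorem -/

set_option maxHeartbeats 2000000 in
lemma division_exists {w : Fin n → ℝ} (hw : ∀ i, 0 < w i) [Nonempty (Fin p)]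
    (M : Submodule (MvPowerSeries (Fin n) k) (Fin p → MvPowerSeries (Fin n) k))
    (b : Fin p → MvPowerSeries (Fin n) k) :
    ∃ x ∈ M, ∀ κ ∈ suppV (b - x), κ ∉ suppSet (initialModule w M) := by
  classical
  set S : Set ((Fin n →₀ ℕ) × Fin p) := suppSet (initialModule w M) with hSdef
  obtain ⟨B, hB1, hB2⟩ := exists_finset_basis S
  -- normalized standard elements
  have huex : ∀ s : (Fin n →₀ ℕ) × Fin p, ∃ us : Fin p → MvPowerSeries (Fin n) k,
      s ∈ S → us ∈ M ∧ IsInitial w us s ∧ MvPowerSeries.coeff s.1 (us s.2) = 1 := by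
    intro s
    by_cases h : s ∈ S
    · obtain ⟨us, h1, h2, h3⟩ := exists_normalized h
      exact ⟨us, fun _ => ⟨h1, h2, h3⟩⟩
    · exact ⟨0, fun hs => absurd hs h⟩
  choose u huspec using huex
  -- base points
  have hbex : ∀ ι : (Fin n →₀ ℕ) × Fin p, ∃ κ : (Fin n →₀ ℕ) × Fin p,
      ι ∈ S → κ ∈ B ∧ κ.2 = ι.2 ∧ κ.1 ≤ ι.1 := by
    intro ι
    by_cases h : ι ∈ S
    · obtain ⟨κ, h1, h2, h3⟩ := hB2 ι h
      exact ⟨κ, fun _ => ⟨h1, h2, h3⟩⟩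
    · exact ⟨ι, fun hs => absurd hs h⟩
  choose bs hbspec using hbex
  set U : ((Fin n →₀ ℕ) × Fin p) → (Fin p → MvPowerSeries (Fin n) k) :=
    fun ι => (MvPowerSeries.monomial (ι.1 - (bs ι).1) 1 : MvPowerSeries (Fin n) k) •
      u (bs ι) with hUdef
  have hbsS : ∀ ι ∈ S, bs ι ∈ S := fun ι hι => hB1 (Finset.mem_coe.mpr (hbspec ι hι).1)
  have hUspec : ∀ ι ∈ S, U ι ∈ M ∧ IsInitial w (U ι) ι ∧
      MvPowerSeries.coeff ι.1 (U ι ι.2) = 1 := by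
    intro ι hι
    obtain ⟨hmem, hj, hle⟩ := hbspec ι hι
    obtain ⟨hM, hini, hone⟩ := huspec (bs ι) (hbsS ι hι)
    refine ⟨Submodule.smul_mem _ _ hM, ?_, ?_⟩
    · have := isInitial_monomial_smul (w := w) (ι.1 - (bs ι).1) hini
      rwa [tsub_add_cancel_of_le hle, hj, Prod.mk.eta] at this
    · rw [hUdef]
      simp only
      rw [coeff_monomial_smul, if_pos tsub_le_self, tsub_tsub_cancel_of_le hle, ← hj]
      exact hone
  -- the reduction step
  set step : (Fin p → MvPowerSeries (Fin n) k) → (Fin p → MvPowerSeries (Fin n) k) :=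
    fun v => if h : (suppV v ∩ S).Nonempty then
      v - (MvPowerSeries.C
          (MvPowerSeries.coeff (minIdx hw _ h).1 (v (minIdx hw _ h).2)) :
        MvPowerSeries (Fin n) k) • U (minIdx hw _ h)
    else v with hstepdef
  set r : ℕ → (Fin p → MvPowerSeries (Fin n) k) := fun t => step^[t] b with hrdef
  have hr0 : r 0 = b := rfl
  have hrsucc : ∀ t, r (t + 1) = step (r t) := fun t => Function.iterate_succ_apply' step t b
  set idx : ℕ → ((Fin n →₀ ℕ) × Fin p) := fun t =>
    if h : (suppV (r t) ∩ S).Nonempty then minIdx hw _ h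
    else Classical.arbitrary _ with hidxdef
  have hidx_eq : ∀ t (h : (suppV (r t) ∩ S).Nonempty), idx t = minIdx hw _ h := by
    intro t h
    rw [hidxdef]
    simp only
    rw [dif_pos h]
  have hidx_mem : ∀ t, (suppV (r t) ∩ S).Nonempty → idx t ∈ suppV (r t) ∩ S := by
    intro t h
    rw [hidx_eq t h]
    exact minIdx_mem hw _ h
  have hidx_min : ∀ t, (suppV (r t) ∩ S).Nonempty →
      ∀ κ ∈ suppV (r t) ∩ S, key w (idx t) ≤ key w κ := by
    intro t h
    rw [hidx_eq t h]
    exact minIdx_min hw _ h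
  set c : ℕ → k := fun t => MvPowerSeries.coeff (idx t).1 (r t (idx t).2) with hcdef
  have hstep_act : ∀ t, (suppV (r t) ∩ S).Nonempty →
      r (t + 1) = r t - (MvPowerSeries.C (c t) : MvPowerSeries (Fin n) k) •
        U (idx t) := by
    intro t h
    rw [hrsucc t, hstepdef]
    simp only
    rw [dif_pos h, hcdef]
    simp only
    rw [hidx_eq t h]
  have hstep_inact : ∀ t, ¬ (suppV (r t) ∩ S).Nonempty → r (t + 1) = r t := by
    intro t h
    rw [hrsucc t, hstepdef]
    simp only
    rw [dif_neg h]
  set δ : ℕ → (Fin p → MvPowerSeries (Fin n) k) := fun t => r t - r (t + 1) with hδdef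
  have hδ_act : ∀ t, (suppV (r t) ∩ S).Nonempty →
      δ t = (MvPowerSeries.C (c t) : MvPowerSeries (Fin n) k) • U (idx t) := by
    intro t h
    rw [hδdef]
    simp only
    rw [hstep_act t h, sub_sub_cancel]
  have hδ_inact : ∀ t, ¬ (suppV (r t) ∩ S).Nonempty → δ t = 0 := by
    intro t h
    rw [hδdef]
    simp only
    rw [hstep_inact t h, sub_self]
  have hrs : ∀ t, r (t + 1) = r t - δ t := by
    intro t
    rw [hδdef]
    simp only
    rw [sub_sub_cancel]
  have hδ_mem : ∀ t, δ t ∈ M := by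
    intro t
    by_cases h : (suppV (r t) ∩ S).Nonempty
    · rw [hδ_act t h]
      exact Submodule.smul_mem _ _ (hUspec (idx t) (hidx_mem t h).2).1
    · rw [hδ_inact t h]
      exact Submodule.zero_mem _
  have hδ_supp : ∀ t κ, κ ∈ suppV (δ t) →
      (suppV (r t) ∩ S).Nonempty ∧ key w (idx t) ≤ key w κ := by
    intro t κ hκ
    by_cases h : (suppV (r t) ∩ S).Nonempty
    · refine ⟨h, ?_⟩
      rw [hδ_act t h] at hκ
      exact key_le_of_mem_suppV (hUspec (idx t) (hidx_mem t h).2).2.1 (suppV_C_smul hκ)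
    · rw [hδ_inact t h] at hκ
      exact absurd hκ (by simp [suppV])
  have hcoeff_drop : ∀ t, (suppV (r t) ∩ S).Nonempty →
      MvPowerSeries.coeff (idx t).1 (r (t + 1) (idx t).2) = 0 := by
    intro t h
    rw [hstep_act t h, Pi.sub_apply, map_sub, Pi.smul_apply, smul_eq_mul,
      MvPowerSeries.coeff_C_mul, (hUspec (idx t) (hidx_mem t h).2).2.2, mul_one, sub_self]
  have hmono : ∀ t, (suppV (r t) ∩ S).Nonempty → (suppV (r (t + 1)) ∩ S).Nonempty →
      key w (idx t) < key w (idx (t + 1)) := by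
    intro t h h'
    have hmem := hidx_mem (t + 1) h'
    have hne : idx (t + 1) ≠ idx t := by
      intro heq
      have := hmem.1
      rw [suppV, Set.mem_setOf_eq, heq, hcoeff_drop t h] at this
      exact this rfl
    have hle : key w (idx t) ≤ key w (idx (t + 1)) := by
      have hsub : idx (t + 1) ∈ suppV (r t - δ t) := by
        rw [← hrs t]; exact hmem.1
      rcases mem_suppV_sub hsub with hcase | hcase
      · exact hidx_min t h _ ⟨hcase, hmem.2⟩
      · exact (hδ_supp t _ hcase).2
    exact lt_of_le_of_ne hle (fun heq => hne (key_injective w heq.symm))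
  have hinact_forward : ∀ t t', t ≤ t' → ¬ (suppV (r t) ∩ S).Nonempty →
      ¬ (suppV (r t') ∩ S).Nonempty := by
    intro t t' hle h
    induction t' , hle using Nat.le_induction with
    | base => exact h
    | succ t' hle ih =>
      rw [hstep_inact t' ih]
      exact ih
  -- the minima escape to infinity
  have hA : ∀ cB : ℝ, ∃ T : ℕ, ∀ t, T ≤ t → (suppV (r t) ∩ S).Nonempty →
      cB < Lval w (idx t).1 := by
    intro cB
    by_cases hAll : ∀ t, (suppV (r t) ∩ S).Nonempty
    · have hsm : StrictMono (fun t => key w (idx t)) :=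
        strictMono_nat_of_lt_succ (fun t => hmono t (hAll t) (hAll (t + 1)))
      have hinj : Function.Injective idx := by
        intro a b hab
        exact hsm.injective (by rw [hab])
      have hfin : {t : ℕ | Lval w (idx t).1 ≤ cB}.Finite := by
        have hsubset : {t : ℕ | Lval w (idx t).1 ≤ cB} ⊆
            idx ⁻¹' {ι : (Fin n →₀ ℕ) × Fin p | Lval w ι.1 ≤ cB} := fun t ht => ht
        exact Set.Finite.subset ((finite_Lval_le hw cB).preimage hinj.injOn) hsubset
      obtain ⟨T0, hT0⟩ := hfin.bddAbove
      refine ⟨T0 + 1, fun t ht _ => ?_⟩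
      by_contra hcon
      have : t ∈ {t : ℕ | Lval w (idx t).1 ≤ cB} := not_lt.mp hcon
      have := hT0 this
      omega
    · push_neg at hAll
      obtain ⟨t0, ht0⟩ := hAll
      exact ⟨t0, fun t ht hact => absurd hact (hinact_forward t0 t ht (by rw [ht0]; simp))⟩
  -- coefficientwise stabilization of the remainders
  have hSt : ∀ κ : (Fin n →₀ ℕ) × Fin p, ∃ T : ℕ, ∀ t, T ≤ t →
      MvPowerSeries.coeff κ.1 (r t κ.2) = MvPowerSeries.coeff κ.1 (r T κ.2) := by
    intro κ
    obtain ⟨T, hT⟩ := hA (Lval w κ.1)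
    refine ⟨T, fun t ht => ?_⟩
    induction t, ht using Nat.le_induction with
    | base => rfl
    | succ t ht ih =>
      have hδ0 : MvPowerSeries.coeff κ.1 (δ t κ.2) = 0 := by
        by_contra hcon
        obtain ⟨hact, hkey⟩ := hδ_supp t κ hcon
        have h1 : Lval w (idx t).1 ≤ Lval w κ.1 := Lval_le_of_key_le hkey
        have h2 := hT t ht hact
        linarith
      rw [hrs t, Pi.sub_apply, map_sub, hδ0, sub_zero, ih]
  choose Tst hTst using hSt
  set rlim : Fin p → MvPowerSeries (Fin n) k :=
    fun j => (fun d => MvPowerSeries.coeff d (r (Tst (d, j)) j) : (Fin n →₀ ℕ) → k)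
    with hrlimdef
  have hrlim : ∀ (κ : (Fin n →₀ ℕ) × Fin p) (t : ℕ), Tst κ ≤ t →
      MvPowerSeries.coeff κ.1 (r t κ.2) = MvPowerSeries.coeff κ.1 (rlim κ.2) := by
    rintro ⟨d, j⟩ t ht
    have h1 : MvPowerSeries.coeff d (rlim j) =
        MvPowerSeries.coeff d (r (Tst (d, j)) j) := rfl
    rw [h1]
    exact hTst (d, j) t ht
  -- the remainder avoids S
  have hres : ∀ κ ∈ suppV rlim, κ ∉ S := by
    intro κ hκ hκS
    obtain ⟨T2, hT2⟩ := hA (Lval w κ.1)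
    set t : ℕ := max (Tst κ) T2 with htdef
    have h1 : MvPowerSeries.coeff κ.1 (r t κ.2) ≠ 0 := by
      rw [hrlim κ t (le_max_left _ _)]
      exact hκ
    have hact : (suppV (r t) ∩ S).Nonempty := ⟨κ, h1, hκS⟩
    have h2 := hidx_min t hact κ ⟨h1, hκS⟩
    have h3 := hT2 t (le_max_right _ _) hact
    have h4 := Lval_le_of_key_le h2
    linarith
  -- regrouping of the subtracted series over the finite basis
  set CB : ℝ := ∑ s ∈ B, Lval w s.1 with hCBdef
  have hCB : ∀ s ∈ B, Lval w s.1 ≤ CB :=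
    fun s hs => Finset.single_le_sum (f := fun s => Lval w s.1)
      (fun i _ => Lval_nonneg hw i.1) hs
  set hterm : ℕ → ((Fin n →₀ ℕ) × Fin p) → MvPowerSeries (Fin n) k := fun t s =>
    if ((suppV (r t) ∩ S).Nonempty ∧ bs (idx t) = s) then
      (MvPowerSeries.C (c t) : MvPowerSeries (Fin n) k) *
        MvPowerSeries.monomial ((idx t).1 - (bs (idx t)).1) 1
    else 0 with htermdef
  have hδ_eq : ∀ t, δ t = ∑ s ∈ B, hterm t s • u s := by
    intro t
    by_cases h : (suppV (r t) ∩ S).Nonempty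
    · have hιS : idx t ∈ S := (hidx_mem t h).2
      have hbsB : bs (idx t) ∈ B := (hbspec (idx t) hιS).1
      rw [hδ_act t h]
      rw [Finset.sum_eq_single_of_mem (bs (idx t)) hbsB]
      · simp only [htermdef, and_true, hUdef]
        rw [if_pos h, smul_smul]
      · intro s hs hne
        rw [htermdef]
        simp only
        rw [if_neg (fun hcon => hne hcon.2.symm), zero_smul]
    · rw [hδ_inact t h]
      rw [Finset.sum_eq_zero]
      intro s hs
      rw [htermdef]
      simp only
      rw [if_neg (fun hcon => h hcon.1), zero_smul]
  have hLγ : ∀ t, (suppV (r t) ∩ S).Nonempty →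
      Lval w (idx t).1 =
        Lval w ((idx t).1 - (bs (idx t)).1) + Lval w (bs (idx t)).1 := by
    intro t h
    have hle : (bs (idx t)).1 ≤ (idx t).1 := (hbspec (idx t) (hidx_mem t h).2).2.2
    conv_lhs => rw [← tsub_add_cancel_of_le hle]
    rw [Lval_add]
  have hSt' : ∀ (s : (Fin n →₀ ℕ) × Fin p) (d : Fin n →₀ ℕ), ∃ T : ℕ, ∀ t, T ≤ t →
      MvPowerSeries.coeff d (hterm t s) = 0 := by
    intro s d
    obtain ⟨T, hT⟩ := hA (Lval w d + CB)
    refine ⟨T, fun t ht => ?_⟩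
    rw [htermdef]
    simp only
    by_cases hcond : ((suppV (r t) ∩ S).Nonempty ∧ bs (idx t) = s)
    · rw [if_pos hcond, MvPowerSeries.coeff_C_mul, MvPowerSeries.coeff_monomial]
      have hne : d ≠ (idx t).1 - (bs (idx t)).1 := by
        intro heq
        have h1 := hLγ t hcond.1
        have h2 := hCB (bs (idx t)) (hbspec (idx t) (hidx_mem t hcond.1).2).1
        have h3 := hT t ht hcond.1
        rw [← heq] at h1
        linarith
      rw [if_neg hne, mul_zero]
    · rw [if_neg hcond, map_zero]
  set P : ℕ → ((Fin n →₀ ℕ) × Fin p) → MvPowerSeries (Fin n) k :=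
    fun T s => ∑ t ∈ Finset.range T, hterm t s with hPdef
  have hSt2 : ∀ (s : (Fin n →₀ ℕ) × Fin p) (d : Fin n →₀ ℕ), ∃ T : ℕ, ∀ t, T ≤ t →
      MvPowerSeries.coeff d (P t s) = MvPowerSeries.coeff d (P T s) := by
    intro s d
    obtain ⟨T, hT⟩ := hSt' s d
    refine ⟨T, fun t ht => ?_⟩
    induction t, ht using Nat.le_induction with
    | base => rfl
    | succ t ht ih =>
      rw [hPdef]
      simp only
      rw [Finset.sum_range_succ, map_add, hT t ht, add_zero, ih]
  choose Tp hTp using hSt2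
  set H : ((Fin n →₀ ℕ) × Fin p) → MvPowerSeries (Fin n) k := fun s =>
    (fun d => MvPowerSeries.coeff d (P (Tp s d) s) : (Fin n →₀ ℕ) → k) with hHdef
  have hH : ∀ (s : (Fin n →₀ ℕ) × Fin p) (d : Fin n →₀ ℕ) (t : ℕ), Tp s d ≤ t →
      MvPowerSeries.coeff d (P t s) = MvPowerSeries.coeff d (H s) := by
    intro s d t ht
    have h1 : MvPowerSeries.coeff d (H s) =
        MvPowerSeries.coeff d (P (Tp s d) s) := rfl
    rw [h1]
    exact hTp s d t ht
  set x : Fin p → MvPowerSeries (Fin n) k := ∑ s ∈ B, H s • u s with hxdef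
  have hxM : x ∈ M := by
    rw [hxdef]
    exact Submodule.sum_mem _ fun s hs =>
      Submodule.smul_mem _ _ (huspec s (hB1 (Finset.mem_coe.mpr hs))).1
  have htel : ∀ T, b - r T = ∑ t ∈ Finset.range T, δ t := by
    intro T
    have : ∑ t ∈ Finset.range T, δ t = ∑ t ∈ Finset.range T, (r t - r (t + 1)) :=
      Finset.sum_congr rfl fun t _ => rfl
    rw [this, Finset.sum_range_sub' r, hr0]
  -- the crucial identity
  have hbx : b - x = rlim := by
    funext j
    apply MvPowerSeries.ext
    intro d
    set T : ℕ := max (Tst (d, j))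
        ((B ×ˢ Finset.HasAntidiagonal.antidiagonal d).sup fun q => Tp q.1 q.2.1) with hTdef
    have hT1 : Tst (d, j) ≤ T := le_max_left _ _
    have hT2 : ∀ s ∈ B, ∀ q ∈ Finset.HasAntidiagonal.antidiagonal d, Tp s q.1 ≤ T := by
      intro s hs q hq
      refine le_trans ?_ (le_max_right _ _)
      exact Finset.le_sup (f := fun q => Tp q.1 q.2.1) (b := (s, q))
        (Finset.mem_product.mpr ⟨hs, hq⟩)
    have hstepD : ∀ s ∈ B, MvPowerSeries.coeff d ((P T s • u s) j) =
        MvPowerSeries.coeff d ((H s • u s) j) := by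
      intro s hs
      rw [Pi.smul_apply, Pi.smul_apply, smul_eq_mul, smul_eq_mul,
        MvPowerSeries.coeff_mul, MvPowerSeries.coeff_mul]
      refine Finset.sum_congr rfl fun q hq => ?_
      rw [hH s q.1 T (hT2 s hs q hq)]
    have hxc : MvPowerSeries.coeff d (x j) =
        MvPowerSeries.coeff d (b j) - MvPowerSeries.coeff d (r T j) := by
      rw [show MvPowerSeries.coeff d (b j) - MvPowerSeries.coeff d (r T j)
          = MvPowerSeries.coeff d ((b - r T) j) by rw [Pi.sub_apply, map_sub]]
      rw [htel T]
      have h1 : MvPowerSeries.coeff d (x j) =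
          ∑ s ∈ B, MvPowerSeries.coeff d ((H s • u s) j) := by
        rw [hxdef, Finset.sum_apply, map_sum]
      have h2 : MvPowerSeries.coeff d ((∑ t ∈ Finset.range T, δ t) j) =
          ∑ t ∈ Finset.range T, MvPowerSeries.coeff d (δ t j) := by
        rw [Finset.sum_apply, map_sum]
      rw [h1, h2]
      have h3 : ∀ t, MvPowerSeries.coeff d (δ t j) =
          ∑ s ∈ B, MvPowerSeries.coeff d ((hterm t s • u s) j) := by
        intro t
        rw [hδ_eq t, Finset.sum_apply, map_sum]
      rw [Finset.sum_congr rfl fun t _ => h3 t, Finset.sum_comm]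
      refine Finset.sum_congr rfl fun s hs => ?_
      rw [← hstepD s hs]
      have h4 : (P T s) • u s = ∑ t ∈ Finset.range T, hterm t s • u s := by
        rw [hPdef]
        simp only
        rw [Finset.sum_smul]
      rw [h4, Finset.sum_apply, map_sum]
    have h5 : MvPowerSeries.coeff d (rlim j) =
        MvPowerSeries.coeff d (r T j) := (hrlim (d, j) T hT1).symm
    rw [Pi.sub_apply, map_sub, h5]
    rw [hxc]
    ring
  refine ⟨x, hxM, ?_⟩
  rw [hbx]
  exact hres


lemma division_unique {w : Fin n → ℝ} (hw : ∀ i, 0 < w i)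
    (M : Submodule (MvPowerSeries (Fin n) k) (Fin p → MvPowerSeries (Fin n) k))
    {x y x' y' : Fin p → MvPowerSeries (Fin n) k}
    (hx : x ∈ M) (hx' : x' ∈ M)
    (hy : ∀ κ ∈ suppV y, κ ∉ suppSet (initialModule w M))
    (hy' : ∀ κ ∈ suppV y', κ ∉ suppSet (initialModule w M))
    (h : x + y = x' + y') : x = x' ∧ y = y' := by
  have hd : x - x' ∈ M := Submodule.sub_mem _ hx hx'
  have hd2 : x - x' = y' - y := by
    rw [sub_eq_sub_iff_add_eq_add, h]
    exact add_comm x' y'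
  by_cases hne : x - x' = 0
  · refine ⟨sub_eq_zero.mp hne, ?_⟩
    have h0 : y' - y = 0 := by rw [← hd2]; exact hne
    exact (sub_eq_zero.mp h0).symm
  · obtain ⟨ι, hι⟩ := exists_isInitial hw hne
    have hS : ι ∈ suppSet (initialModule w M) := mem_suppSet_of_isInitial hd hι
    have hsupp : ι ∈ suppV (x - x') := hι.1
    rw [hd2] at hsupp
    rcases mem_suppV_sub hsupp with h1 | h1
    · exact absurd hS (hy' ι h1)
    · exact absurd hS (hy ι h1)

end PCR

/-- **Pointwise constant rank criterion.**
Let `f` be the tactile map induced by `g ∈ k[[x,y]]^p`, with `k[[x]]`-linear tangent maps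
`T_a f`.  If `in(im(T_a f)) = in(im(T_0 f))` for all `a ∈ U`, then for every `a ∈ U`
one has the direct sum decomposition `C^p = im(T_a f) ⊕ Δ(T_0 f)`, where
`Δ(T_0 f) = {b : supp(b) ∩ supp(in(im(T_0 f))) = ∅}`. -/
theorem pointwise_constant_rank
    [CharZero k] {n m p : ℕ} (l : ℕ) (hl : 1 ≤ l)
    (w : Fin n → ℝ) (hw : ∀ i, 0 < w i)
    (U : Set (Fin m → MvPowerSeries (Fin n) k)) (hU : U = nbhd k n m l)
    (g : Fin p → MvPowerSeries (Fin n ⊕ Fin m) k)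
    (hinit : ∀ a ∈ U,
      initialModule w (Submodule.span _ (Set.range (tacD g a))) =
      initialModule w (Submodule.span _ (Set.range (tacD g 0)))) :
    ∀ a ∈ U, ∀ b : Fin p → MvPowerSeries (Fin n) k,
      ∃! q : (Fin p → MvPowerSeries (Fin n) k) × (Fin p → MvPowerSeries (Fin n) k),
        q.1 ∈ Submodule.span (MvPowerSeries (Fin n) k) (Set.range (tacD g a)) ∧
        (∀ κ ∈ suppV q.2,
          κ ∉ suppSet (initialModule w
            (Submodule.span _ (Set.range (tacD g 0))))) ∧
        b = q.1 + q.2 := by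
  intro a ha b
  have hS : initialModule w (Submodule.span _ (Set.range (tacD g a))) =
      initialModule w (Submodule.span _ (Set.range (tacD g 0))) := hinit a ha
  rcases isEmpty_or_nonempty (Fin p) with hp | hp
  · haveI : Subsingleton (Fin p → MvPowerSeries (Fin n) k) :=
      ⟨fun u v => funext fun j => absurd (Set.mem_univ j) (by simpa using hp.false j)⟩
    refine ⟨(0, b), ⟨Submodule.zero_mem _, fun κ _ => absurd (Set.mem_univ κ.2) (by simpa using hp.false κ.2), (zero_add b).symm⟩, ?_⟩
    rintro ⟨x, y⟩ _
    exact Prod.ext (Subsingleton.elim _ _) (Subsingleton.elim _ _)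
  · obtain ⟨x, hxM, hx⟩ := PCR.division_exists hw
      (Submodule.span _ (Set.range (tacD g a))) b
    refine ⟨(x, b - x), ⟨hxM, ?_, ?_⟩, ?_⟩
    · intro κ hκ
      rw [← hS]
      exact hx κ hκ
    · exact (add_sub_cancel x b).symm
    · rintro ⟨x', y'⟩ ⟨hx'M, hy', hsum⟩
      have hsum' : x' + y' = x + (b - x) := by
        rw [← hsum, add_sub_cancel]
      have hy'' : ∀ κ ∈ suppV y',
          κ ∉ suppSet (initialModule w (Submodule.span _ (Set.range (tacD g a)))) := by
        intro κ hκ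
        rw [hS]
        exact hy' κ hκ
      obtain ⟨h1, h2⟩ := PCR.division_unique hw
        (Submodule.span _ (Set.range (tacD g a))) hx'M hxM hy'' hx hsum'
      exact Prod.ext h1 h2
end
end

section
/- Fibre triviality for arcs on a hypersurface (Denef–Loeser type): Let k be a field of characteristic 0, f ∈ k[x_1,…,x_n], and a ∈ k[[t]]^n an arc with f(a) = 0 such that e' := min_{1≤i≤n} ord_t(∂_i f(a)) is finite and e' ≤ e for a given integer e ≥ 0. Then the fibre of the truncation map over a, namely the set {b ∈ k[[t]]^n : f(b) = 0 and b ≡ a mod (t)^{e+1}}, is in bijection with ((t)^{e+1}·k[[t]])^{n−1}. -/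
/- Fibre triviality for arcs on a hypersurface (Denef–Loeser type). -/

noncomputable section

namespace ArcAux
variable {k : Type} [Field k] {n : ℕ}

lemma X_pow_dvd_order {N : ℕ} {z : PowerSeries k} :
    (PowerSeries.X : PowerSeries k) ^ N ∣ z ↔ (N : ℕ∞) ≤ z.order := by
  rw [PowerSeries.X_pow_dvd_iff]
  constructor
  · intro h
    exact PowerSeries.nat_le_order z N h
  · intro h i hi
    exact PowerSeries.coeff_of_lt_order i (lt_of_lt_of_le (by exact_mod_cast hi) h)

lemma eval_add_taylor {A : Type} [CommRing A] (p : Polynomial A) (y z : A) :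
    p.eval (y + z) = p.eval y + p.derivative.eval y * z
      + z ^ 2 * (((Polynomial.taylor y p).divX.divX).eval z) := by
  have h0 : ∀ q : Polynomial A, q.eval z = q.coeff 0 + z * q.divX.eval z := fun q => by
    conv_lhs => rw [← Polynomial.divX_mul_X_add q]
    simp [Polynomial.eval_add, Polynomial.eval_mul]
    ring
  have h := Polynomial.taylor_eval y p z
  rw [add_comm y z, ← h, h0 (Polynomial.taylor y p), h0 (Polynomial.taylor y p).divX,
    Polynomial.taylor_coeff_zero, Polynomial.coeff_divX, zero_add,
    Polynomial.taylor_coeff_one]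
  ring

def uni (w : Fin n → PowerSeries k) (j₀ : Fin n) (g : MvPolynomial (Fin n) k) :
    Polynomial (PowerSeries k) :=
  MvPolynomial.aeval (fun j => if j = j₀ then Polynomial.X else Polynomial.C (w j)) g

lemma eval_uni (w : Fin n → PowerSeries k) (j₀ : Fin n) (g : MvPolynomial (Fin n) k)
    (x : PowerSeries k) :
    (uni w j₀ g).eval x = MvPolynomial.aeval (Function.update w j₀ x) g := by
  have key : (((Polynomial.aeval x).restrictScalars k).comp
      (MvPolynomial.aeval (R := k)
        (fun j => if j = j₀ then Polynomial.X else Polynomial.C (w j))))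
      = MvPolynomial.aeval (Function.update w j₀ x) := by
    apply MvPolynomial.algHom_ext
    intro j
    by_cases hj : j = j₀ <;> simp [hj, Function.update_apply]
  have h2 := congrFun (congrArg (fun φ => φ.toFun) key) g
  simp only [AlgHom.toFun_eq_coe, AlgHom.coe_comp, AlgHom.coe_restrictScalars',
    Function.comp_apply] at h2
  rw [uni, ← Polynomial.coe_aeval_eq_eval]
  exact h2

lemma derivative_uni (w : Fin n → PowerSeries k) (j₀ : Fin n) (g : MvPolynomial (Fin n) k) :
    (uni w j₀ g).derivative = uni w j₀ (MvPolynomial.pderiv j₀ g) := by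
  induction g using MvPolynomial.induction_on with
  | C a =>
      simp [uni, MvPolynomial.aeval_C, MvPolynomial.pderiv_C, Polynomial.algebraMap_apply]
  | add p q hp hq =>
      simp only [uni, map_add, Polynomial.derivative_add] at hp hq ⊢
      rw [hp, hq]
  | mul_X p i hp =>
      simp only [uni, map_mul, MvPolynomial.aeval_X, MvPolynomial.pderiv_mul, map_add] at hp ⊢
      rw [Polynomial.derivative_mul, hp]
      by_cases hij : i = j₀
      · subst hij
        simp [MvPolynomial.pderiv_X_self]
      · simp [hij, MvPolynomial.pderiv_X_of_ne hij]

lemma aeval_sub_dvd (N : ℕ) (g : MvPolynomial (Fin n) k) {u v : Fin n → PowerSeries k}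
    (h : ∀ j, (PowerSeries.X : PowerSeries k) ^ N ∣ (u j - v j)) :
    (PowerSeries.X : PowerSeries k) ^ N ∣ (MvPolynomial.aeval u g - MvPolynomial.aeval v g) := by
  set I : Ideal (PowerSeries k) := Ideal.span {(PowerSeries.X : PowerSeries k) ^ N} with hI
  have key : (Ideal.Quotient.mkₐ k I).comp (MvPolynomial.aeval u)
      = (Ideal.Quotient.mkₐ k I).comp (MvPolynomial.aeval v) := by
    apply MvPolynomial.algHom_ext
    intro j
    simp only [AlgHom.coe_comp, Function.comp_apply, MvPolynomial.aeval_X,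
      Ideal.Quotient.mkₐ_eq_mk]
    rw [Ideal.Quotient.eq]
    exact Ideal.mem_span_singleton.mpr (h j)
  have h2 := congrFun (congrArg (fun φ => φ.toFun) key) g
  simp only [AlgHom.toFun_eq_coe, AlgHom.coe_comp, Function.comp_apply,
    Ideal.Quotient.mkₐ_eq_mk] at h2
  rw [← Ideal.mem_span_singleton, ← hI]
  exact Ideal.Quotient.eq.mp h2


lemma aeval_sub_dvd_strong (N m₀ : ℕ) (g : MvPolynomial (Fin n) k)
    {u v : Fin n → PowerSeries k} (hm : m₀ ≤ N)
    (hu : ∀ j, (PowerSeries.X : PowerSeries k) ^ N ∣ (u j - v j))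
    (hd : ∀ j, (PowerSeries.X : PowerSeries k) ^ m₀ ∣
      MvPolynomial.aeval v (MvPolynomial.pderiv j g)) :
    (PowerSeries.X : PowerSeries k) ^ (m₀ + N) ∣
      (MvPolynomial.aeval u g - MvPolynomial.aeval v g) := by
  classical
  set w : ℕ → Fin n → PowerSeries k := fun s j => if (j : ℕ) < s then u j else v j with hw
  have hw0 : w 0 = v := funext fun j => if_neg (Nat.not_lt_zero _)
  have hwn : w n = u := funext fun j => if_pos j.2
  have hwv : ∀ s j, (PowerSeries.X : PowerSeries k) ^ N ∣ (w s j - v j) := by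
    intro s j
    by_cases h : (j : ℕ) < s
    · simp only [hw, if_pos h]; exact hu j
    · simp only [hw, if_neg h, sub_self]; exact dvd_zero _
  have key : ∀ s : ℕ, s < n → (PowerSeries.X : PowerSeries k) ^ (m₀ + N) ∣
      (MvPolynomial.aeval (w (s + 1)) g - MvPolynomial.aeval (w s) g) := by
    intro s hs
    set j₀ : Fin n := ⟨s, hs⟩ with hj₀
    have hwsj : w s j₀ = v j₀ := if_neg (by simp [hj₀])
    have hws : w s = Function.update (w s) j₀ (v j₀) := by
      funext j
      rw [Function.update_apply]
      split
      · next h => rw [h, hwsj]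
      · rfl
    have hws1 : w (s + 1) = Function.update (w s) j₀ (u j₀) := by
      funext j
      rw [Function.update_apply]
      split
      · next h => simp only [hw, h]; exact if_pos (by simp [hj₀])
      · next h =>
          have : (j : ℕ) ≠ s := fun hc => h (Fin.ext hc)
          simp only [hw]
          by_cases h2 : (j : ℕ) < s
          · rw [if_pos h2, if_pos (Nat.lt_succ_of_lt h2)]
          · rw [if_neg h2, if_neg (by omega)]
    set P := uni (w s) j₀ g with hP
    have e1 : MvPolynomial.aeval (w (s + 1)) g = P.eval (u j₀) := by
      rw [hP, eval_uni, ← hws1]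
    have e2 : MvPolynomial.aeval (w s) g = P.eval (v j₀) := by
      rw [hP, eval_uni, ← hws]
    have e3 : P.derivative.eval (v j₀) = MvPolynomial.aeval (w s) (MvPolynomial.pderiv j₀ g) := by
      rw [hP, derivative_uni, eval_uni, ← hws]
    have taylor := eval_add_taylor P (v j₀) (u j₀ - v j₀)
    rw [add_sub_cancel] at taylor
    have hdiff : MvPolynomial.aeval (w (s + 1)) g - MvPolynomial.aeval (w s) g
        = P.derivative.eval (v j₀) * (u j₀ - v j₀)
          + (u j₀ - v j₀) ^ 2 * (((Polynomial.taylor (v j₀) P).divX.divX).eval (u j₀ - v j₀)) := by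
      rw [e1, e2, taylor]; ring
    rw [hdiff]
    apply dvd_add
    · rw [pow_add]
      apply mul_dvd_mul _ (hu j₀)
      have h1 : (PowerSeries.X : PowerSeries k) ^ m₀ ∣
          (MvPolynomial.aeval (w s) (MvPolynomial.pderiv j₀ g)
            - MvPolynomial.aeval v (MvPolynomial.pderiv j₀ g)) :=
        (pow_dvd_pow _ hm).trans (aeval_sub_dvd N _ (hwv s))
      rw [e3]
      have := dvd_add h1 (hd j₀)
      simpa using this
    · have h2 : (PowerSeries.X : PowerSeries k) ^ (N + N) ∣ (u j₀ - v j₀) ^ 2 := by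
        rw [pow_add, sq]
        exact mul_dvd_mul (hu j₀) (hu j₀)
      exact ((pow_dvd_pow _ (by omega : m₀ + N ≤ N + N)).trans h2).trans (dvd_mul_right _ _)
  have tele := Finset.sum_range_sub (fun s => MvPolynomial.aeval (w s) g) n
  rw [hw0, hwn] at tele
  rw [← tele]
  exact Finset.dvd_sum fun s hs => key s (Finset.mem_range.mp hs)


lemma exists_fixed_point (G : PowerSeries k → PowerSeries k)
    (hG : ∀ (N : ℕ) (y y' : PowerSeries k), (PowerSeries.X : PowerSeries k) ^ N ∣ (y - y') →
      (PowerSeries.X : PowerSeries k) ^ (N + 1) ∣ (G y - G y')) :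
    ∃ L, G L = L := by
  set y : ℕ → PowerSeries k := fun s => G^[s] 0 with hy'
  have hy : ∀ s, y (s + 1) = G (y s) := fun s => Function.iterate_succ_apply' G s 0
  have hstep : ∀ s, (PowerSeries.X : PowerSeries k) ^ s ∣ (y (s + 1) - y s) := by
    intro s
    induction s with
    | zero => rw [pow_zero]; exact one_dvd _
    | succ s ih =>
        rw [hy s] at ih
        rw [hy (s + 1), hy s]
        exact hG s _ _ ih
  have hchain : ∀ s t : ℕ, s ≤ t → (PowerSeries.X : PowerSeries k) ^ s ∣ (y t - y s) := by
    intro s t hst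
    induction t, hst using Nat.le_induction with
    | base => simp
    | succ t hst ih =>
        have h3 : y (t + 1) - y s = (y (t + 1) - y t) + (y t - y s) := by ring
        rw [h3]
        exact dvd_add ((pow_dvd_pow _ hst).trans (hstep t)) ih
  set L : PowerSeries k := PowerSeries.mk (fun j => PowerSeries.coeff j (y (j + 1))) with hL
  have hLy : ∀ s, (PowerSeries.X : PowerSeries k) ^ s ∣ (L - y s) := by
    intro s
    rw [PowerSeries.X_pow_dvd_iff]
    intro j hj
    have h1 := hchain (j + 1) s hj
    rw [PowerSeries.X_pow_dvd_iff] at h1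
    have h2 := h1 j (Nat.lt_succ_self j)
    rw [map_sub] at h2 ⊢
    have hc : (PowerSeries.coeff j) L = (PowerSeries.coeff j) (y (j + 1)) := by
      rw [hL, PowerSeries.coeff_mk]
    rw [hc]
    linear_combination -h2
  refine ⟨L, ?_⟩
  have hzero : ∀ s : ℕ, (PowerSeries.X : PowerSeries k) ^ (s + 1) ∣ (G L - L) := by
    intro s
    have h1 := hG s L (y s) (hLy s)
    have h2 : (PowerSeries.X : PowerSeries k) ^ (s + 1) ∣ (y (s + 1) - L) :=
      dvd_sub_comm.mp (hLy (s + 1))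
    have h3 : G L - L = (G L - G (y s)) + (y (s + 1) - L) := by rw [hy s]; ring
    rw [h3]
    exact dvd_add h1 h2
  have : G L - L = 0 := by
    ext j
    have := hzero j
    rw [PowerSeries.X_pow_dvd_iff] at this
    simpa using this j (Nat.lt_succ_self j)
  exact sub_eq_zero.mp this


lemma hensel_exists (P : Polynomial (PowerSeries k)) (a₀ : PowerSeries k) (E m₀ : ℕ)
    (hlt : m₀ < E)
    (h0 : (PowerSeries.X : PowerSeries k) ^ (m₀ + E) ∣ P.eval a₀)
    (hc : (PowerSeries.X : PowerSeries k) ^ m₀ ∣ P.derivative.eval a₀)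
    (hcoeff : PowerSeries.coeff m₀ (P.derivative.eval a₀) ≠ 0) :
    ∃ x : PowerSeries k, (PowerSeries.X : PowerSeries k) ^ E ∣ x ∧ P.eval (a₀ + x) = 0 := by
  classical
  set T : PowerSeries k := PowerSeries.X with hT
  obtain ⟨d, hd⟩ : ∃ d, E = m₀ + 1 + d := ⟨E - (m₀ + 1), by omega⟩
  obtain ⟨u, hu⟩ := hc
  have hu0 : PowerSeries.constantCoeff u ≠ 0 := by
    intro h
    apply hcoeff
    rw [hu]
    have h2 := PowerSeries.coeff_X_pow_mul u m₀ 0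
    rw [zero_add] at h2
    rw [← hT] at h2
    rw [h2]
    simpa using h
  have hΦ : ∀ y : PowerSeries k, T ^ (m₀ + E) ∣ P.eval (a₀ + T ^ E * y) := by
    intro y
    rw [eval_add_taylor P a₀ (T ^ E * y), hu]
    refine dvd_add (dvd_add h0 ⟨u * y, by rw [hd]; ring⟩)
      ⟨T ^ (1 + d) * (y ^ 2 * ((Polynomial.taylor a₀ P).divX.divX).eval (T ^ E * y)),
        by rw [hd]; ring⟩
  have hΦ' : ∀ y : PowerSeries k, ∃ c, P.eval (a₀ + T ^ E * y) = T ^ (m₀ + E) * c := hΦ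
  choose ψ hψ using hΦ'
  have hTreg : T ^ (m₀ + E) ≠ 0 := pow_ne_zero _ PowerSeries.X_ne_zero
  have hcontr : ∀ yy y' : PowerSeries k,
      ∃ A, ψ yy - ψ y' = u * (yy - y') + T * ((yy - y') * A) := by
    intro yy y'
    obtain ⟨s, hs⟩ := Polynomial.sub_dvd_eval_sub (a₀ + T ^ E * y') a₀ P.derivative
    have t2 := eval_add_taylor P (a₀ + T ^ E * y') (T ^ E * (yy - y'))
    set EE := ((Polynomial.taylor (a₀ + T ^ E * y') P).divX.divX).eval (T ^ E * (yy - y'))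
      with hEE
    have harg : a₀ + T ^ E * y' + T ^ E * (yy - y') = a₀ + T ^ E * yy := by ring
    rw [harg] at t2
    refine ⟨T ^ d * (y' * s + (yy - y') * EE), ?_⟩
    apply mul_left_cancel₀ hTreg
    have l1 : T ^ (m₀ + E) * (ψ yy - ψ y')
        = P.eval (a₀ + T ^ E * yy) - P.eval (a₀ + T ^ E * y') := by
      rw [mul_sub, ← hψ yy, ← hψ y']
    have hs' : P.derivative.eval (a₀ + T ^ E * y') = T ^ m₀ * u + T ^ E * y' * s := by
      rw [← hu]
      linear_combination hs
    rw [l1, t2, hs', hd]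
    ring
  obtain ⟨vu, hvu⟩ :=
    (PowerSeries.isUnit_iff_constantCoeff.mpr (isUnit_iff_ne_zero.mpr hu0)).exists_left_inv
  set G : PowerSeries k → PowerSeries k := fun y => y - vu * ψ y with hG
  have hGcontr : ∀ (N : ℕ) (yy y' : PowerSeries k), T ^ N ∣ (yy - y') →
      T ^ (N + 1) ∣ (G yy - G y') := by
    intro N yy y' hdvd
    obtain ⟨w, hw⟩ := hdvd
    obtain ⟨A, hA⟩ := hcontr yy y'
    refine ⟨-(vu * A * w), ?_⟩
    have hGd : G yy - G y' = (yy - y') - vu * (ψ yy - ψ y') := by rw [hG]; ring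
    rw [hGd, hA, hw]
    linear_combination (-(T ^ N * w)) * hvu
  obtain ⟨L, hLfix⟩ := exists_fixed_point G hGcontr
  have h1 : vu * ψ L = 0 := by
    have h2 : L - vu * ψ L = L := hLfix
    linear_combination -h2
  have hψL : ψ L = 0 := by
    have h3 := congrArg (fun z => u * z) h1
    simp only [mul_zero] at h3
    calc ψ L = 1 * ψ L := (one_mul _).symm
    _ = (vu * u) * ψ L := by rw [hvu]
    _ = u * (vu * ψ L) := by ring
    _ = 0 := by rw [h1, mul_zero]
  refine ⟨T ^ E * L, dvd_mul_right _ _, ?_⟩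
  have h4 := hψ L
  rw [hψL, mul_zero] at h4
  exact h4

end ArcAux

/-- **Fibre triviality for arcs on a hypersurface.**
Let `f ∈ k[x_1,…,x_n]` and `a ∈ k[[t]]^n` an arc with `f(a) = 0` such that
`e' = min_i ord_t(∂_i f(a))` is finite and `≤ e`.  Then the fibre of the truncation map
over `a`, i.e. `{b : f(b) = 0, b ≡ a mod (t)^{e+1}}`, is in bijection with
`((t)^{e+1}·k[[t]])^{n−1}`. -/
theorem hypersurface_arc_fibre_trivial
    {k : Type} [Field k] [CharZero k] {n : ℕ}
    (f : MvPolynomial (Fin n) k) (a : Fin n → PowerSeries k)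
    (ha : MvPolynomial.aeval a f = 0)
    (e : ℕ)
    (he : ∃ i, PowerSeries.order (MvPolynomial.aeval a (MvPolynomial.pderiv i f)) ≤ (e : ℕ∞)) :
    Nonempty
      ({b : Fin n → PowerSeries k //
          MvPolynomial.aeval b f = 0 ∧
          ∀ i, ((e : ℕ∞) + 1) ≤ PowerSeries.order (b i - a i)} ≃
       {c : Fin (n - 1) → PowerSeries k //
          ∀ i, ((e : ℕ∞) + 1) ≤ PowerSeries.order (c i)}) := by
  classical
  cases n with
  | zero => obtain ⟨i, -⟩ := he; exact i.elim0
  | succ m =>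
    set E := e + 1 with hE
    have hEiff : ∀ z : PowerSeries k,
        (((e : ℕ∞) + 1) ≤ z.order) ↔ (PowerSeries.X : PowerSeries k) ^ E ∣ z := by
      intro z
      rw [ArcAux.X_pow_dvd_order]
      constructor <;> intro h <;> [skip; skip] <;>
        · refine le_trans (le_of_eq ?_) h
          push_cast [hE]
          ring
    obtain ⟨i0, hi0⟩ := he
    obtain ⟨istar, -, hmin⟩ := Finset.exists_min_image (Finset.univ : Finset (Fin (m + 1)))
      (fun i => (MvPolynomial.aeval a (MvPolynomial.pderiv i f)).order) ⟨i0, Finset.mem_univ _⟩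
    have hstar_le : (MvPolynomial.aeval a (MvPolynomial.pderiv istar f)).order ≤ (e : ℕ∞) :=
      le_trans (hmin i0 (Finset.mem_univ _)) hi0
    obtain ⟨m₀, hm₀, hm₀e⟩ := WithTop.le_coe_iff.mp hstar_le
    have hm₀E : m₀ < E := by omega
    have hcoeffstar :
        PowerSeries.coeff m₀ (MvPolynomial.aeval a (MvPolynomial.pderiv istar f)) ≠ 0 :=
      (PowerSeries.order_eq_nat.mp hm₀).1
    have hall : ∀ j, (PowerSeries.X : PowerSeries k) ^ m₀ ∣
        MvPolynomial.aeval a (MvPolynomial.pderiv j f) := by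
      intro j
      rw [ArcAux.X_pow_dvd_order]
      exact le_trans (le_of_eq hm₀.symm) (hmin j (Finset.mem_univ _))
    refine ⟨Equiv.ofBijective
      (fun b => ⟨fun i => b.1 (istar.succAbove i) - a (istar.succAbove i),
        fun i => b.2.2 _⟩) ⟨?_, ?_⟩⟩
    · -- injectivity
      intro b b' hbb'
      have hoff : ∀ j, j ≠ istar → b.1 j = b'.1 j := by
        intro j hj
        obtain ⟨i, rfl⟩ := Fin.exists_succAbove_eq hj
        have h1 := congrFun (congrArg Subtype.val hbb') i
        simp only at h1
        exact sub_left_inj.mp h1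
      set P := ArcAux.uni b.1 istar f with hP
      have hx : P.eval (b.1 istar) = 0 := by
        rw [hP, ArcAux.eval_uni, Function.update_eq_self]
        exact b.2.1
      have hfun : Function.update b.1 istar (b'.1 istar) = b'.1 := by
        funext j
        rcases eq_or_ne j istar with rfl | hj
        · rw [Function.update_self]
        · rw [Function.update_of_ne hj]
          exact hoff j hj
      have hx' : P.eval (b'.1 istar) = 0 := by
        rw [hP, ArcAux.eval_uni, hfun]
        exact b'.2.1
      have t := ArcAux.eval_add_taylor P (b.1 istar) (b'.1 istar - b.1 istar)
      rw [add_sub_cancel] at t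
      set z := b'.1 istar - b.1 istar with hz
      set EE := ((Polynomial.taylor (b.1 istar) P).divX.divX).eval z with hEE
      have hfactor : z * (P.derivative.eval (b.1 istar) + z * EE) = 0 := by
        linear_combination (-1 : PowerSeries k) * t + hx' + (-1 : PowerSeries k) * hx
      rcases mul_eq_zero.mp hfactor with hz0 | hcontra
      · apply Subtype.ext
        funext j
        rcases eq_or_ne j istar with h | hj
        · rw [hz] at hz0
          rw [h]
          exact (sub_eq_zero.mp hz0).symm
        · exact hoff j hj
      · exfalso
        have hder : P.derivative.eval (b.1 istar)
            = MvPolynomial.aeval b.1 (MvPolynomial.pderiv istar f) := by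
          rw [hP, ArcAux.derivative_uni, ArcAux.eval_uni, Function.update_eq_self]
        have hba : ∀ j, (PowerSeries.X : PowerSeries k) ^ E ∣ (b.1 j - a j) :=
          fun j => (hEiff _).mp (b.2.2 j)
        have hdel : (PowerSeries.X : PowerSeries k) ^ E ∣
            (MvPolynomial.aeval b.1 (MvPolynomial.pderiv istar f)
              - MvPolynomial.aeval a (MvPolynomial.pderiv istar f)) :=
          ArcAux.aeval_sub_dvd E _ hba
        have hzdvd : (PowerSeries.X : PowerSeries k) ^ E ∣ z := by
          have h1 := (hEiff _).mp (b'.2.2 istar)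
          have h2 := (hEiff _).mp (b.2.2 istar)
          have h3 : z = (b'.1 istar - a istar) - (b.1 istar - a istar) := by rw [hz]; ring
          rw [h3]
          exact dvd_sub h1 h2
        have hEdvd : (PowerSeries.X : PowerSeries k) ^ E ∣
            MvPolynomial.aeval a (MvPolynomial.pderiv istar f) := by
          have heq : MvPolynomial.aeval a (MvPolynomial.pderiv istar f)
              = -(z * EE) - (MvPolynomial.aeval b.1 (MvPolynomial.pderiv istar f)
                - MvPolynomial.aeval a (MvPolynomial.pderiv istar f)) := by
            linear_combination hcontra - hder
          rw [heq]
          exact dvd_sub (dvd_neg.mpr (hzdvd.mul_right EE)) hdel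
        have hfin : (PowerSeries.X : PowerSeries k) ^ (m₀ + 1) ∣
            MvPolynomial.aeval a (MvPolynomial.pderiv istar f) :=
          (pow_dvd_pow _ (by omega : m₀ + 1 ≤ E)).trans hEdvd
        rw [PowerSeries.X_pow_dvd_iff] at hfin
        exact hcoeffstar (hfin m₀ (Nat.lt_succ_self m₀))
    · -- surjectivity
      intro c
      set b₀ : Fin (m + 1) → PowerSeries k := fun j => a j + Fin.insertNth (α := fun _ => PowerSeries k) istar 0 c.1 j with hb₀
      have hb₀a : ∀ j, (PowerSeries.X : PowerSeries k) ^ E ∣ (b₀ j - a j) := by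
        intro j
        rcases eq_or_ne j istar with rfl | hj
        · simp [hb₀, Fin.insertNth_apply_same]
        · obtain ⟨i, rfl⟩ := Fin.exists_succAbove_eq hj
          have h1 := (hEiff _).mp (c.2 i)
          simpa [hb₀, Fin.insertNth_apply_succAbove] using h1
      set P := ArcAux.uni b₀ istar f with hP
      have ha' : ∀ j, (PowerSeries.X : PowerSeries k) ^ E ∣
          (Function.update b₀ istar (a istar) j - a j) := by
        intro j
        rcases eq_or_ne j istar with rfl | hj
        · simp [Function.update_self]
        · rw [Function.update_of_ne hj]
          exact hb₀a j
      have h0 : (PowerSeries.X : PowerSeries k) ^ (m₀ + E) ∣ P.eval (a istar) := by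
        rw [hP, ArcAux.eval_uni]
        have h1 := ArcAux.aeval_sub_dvd_strong E m₀ f (le_of_lt hm₀E) ha' hall
        simpa [ha] using h1
      have hder : P.derivative.eval (a istar)
          = MvPolynomial.aeval (Function.update b₀ istar (a istar))
              (MvPolynomial.pderiv istar f) := by
        rw [hP, ArcAux.derivative_uni, ArcAux.eval_uni]
      have hδ : (PowerSeries.X : PowerSeries k) ^ E ∣ (P.derivative.eval (a istar)
          - MvPolynomial.aeval a (MvPolynomial.pderiv istar f)) := by
        rw [hder]
        exact ArcAux.aeval_sub_dvd E _ ha'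
      obtain ⟨w, hw⟩ := hδ
      have heq : P.derivative.eval (a istar)
          = MvPolynomial.aeval a (MvPolynomial.pderiv istar f)
            + (PowerSeries.X : PowerSeries k) ^ E * w := by
        linear_combination hw
      have hcdvd : (PowerSeries.X : PowerSeries k) ^ m₀ ∣ P.derivative.eval (a istar) := by
        rw [heq]
        exact dvd_add (hall istar) ((pow_dvd_pow _ (le_of_lt hm₀E)).mul_right w)
      have hccoeff : PowerSeries.coeff m₀ (P.derivative.eval (a istar)) ≠ 0 := by
        rw [heq, map_add]
        have h2 : PowerSeries.coeff m₀ ((PowerSeries.X : PowerSeries k) ^ E * w) = 0 := by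
          have hdvd2 : (PowerSeries.X : PowerSeries k) ^ (m₀ + 1) ∣
              (PowerSeries.X : PowerSeries k) ^ E * w :=
            (pow_dvd_pow _ (by omega : m₀ + 1 ≤ E)).mul_right w
          rw [PowerSeries.X_pow_dvd_iff] at hdvd2
          exact hdvd2 m₀ (Nat.lt_succ_self m₀)
        rw [h2, add_zero]
        exact hcoeffstar
      obtain ⟨x, hxdvd, hxroot⟩ := ArcAux.hensel_exists P (a istar) E m₀ hm₀E h0 hcdvd hccoeff
      refine ⟨⟨Function.update b₀ istar (a istar + x), ?_, ?_⟩, ?_⟩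
      · rw [show Function.update b₀ istar (a istar + x)
            = Function.update b₀ istar (a istar + x) from rfl]
        have h3 := ArcAux.eval_uni b₀ istar f (a istar + x)
        rw [← h3, ← hP]
        exact hxroot
      · intro i
        rw [hEiff]
        rcases eq_or_ne i istar with rfl | hi
        · rw [Function.update_self]
          simpa using hxdvd
        · rw [Function.update_of_ne hi]
          exact hb₀a i
      · apply Subtype.ext
        funext i
        have hne : istar.succAbove i ≠ istar := Fin.succAbove_ne istar i
        simp only [Function.update_of_ne hne, hb₀, Fin.insertNth_apply_succAbove]
        ring
end
end

section
/- Deformations of an arc on the hypersurface y·x_{n+1} + f(x_1,…,x_n) = 0 over a test-ring: Let k be a field, A a test-ring over k (local commutative unital k-algebra with nilpotent maximal ideal m_A and residue field k), and f ∈ k[x_1,…,x_n] with f(0) = 0. Let α ∈ m_A, u ∈ A[[t]]^× a unit, and x_1(t),…,x_n(t) ∈ m_A[[t]] power series all of whose coefficients lie in m_A. Then there exists at most one y(t) ∈ m_A[[t]] such that y(t)·u(t)·(t − α) + f(x_1(t),…,x_n(t)) = 0; moreover such a y(t) exists if and only if f(x_1(α),…,x_n(α)) = 0, where x_i(α) denotes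 the (well-defined, since α is nilpotent) evaluation of x_i(t) at t = α. -/
/- Deformations of an arc on the hypersurface y·x_{n+1} + f(x_1,…,x_n) = 0 over a
test-ring. -/

noncomputable section

open PowerSeries Finset

namespace TestRingAux

variable {A : Type} [CommRing A]

/-- Evaluation of a power series at a nilpotent element `α` with `α ^ N = 0`. -/
def psEval (α : A) (N : ℕ) (z : PowerSeries A) : A :=
  ∑ j ∈ Finset.range N, PowerSeries.coeff j z * α ^ j

lemma pow_eq_zero_of_le {α : A} {N j : ℕ} (hα : α ^ N = 0) (h : N ≤ j) : α ^ j = 0 := by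
  obtain ⟨m, rfl⟩ := Nat.exists_eq_add_of_le h
  rw [pow_add, hα, zero_mul]

lemma psEval_tail {α : A} {N : ℕ} (hα : α ^ N = 0) {M : ℕ} (hM : N ≤ M) (z : PowerSeries A) :
    psEval α M z = psEval α N z := by
  unfold psEval
  refine (Finset.sum_subset (Finset.range_subset_range.2 hM) fun j _ hj => ?_).symm
  rw [pow_eq_zero_of_le hα (by simpa using hj), mul_zero]

lemma psEval_mul {α : A} {N : ℕ} (hα : α ^ N = 0) (z w : PowerSeries A) :
    psEval α N (z * w) = psEval α N z * psEval α N w := by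
  unfold psEval
  rw [Finset.sum_mul_sum]
  calc ∑ j ∈ range N, PowerSeries.coeff j (z * w) * α ^ j
      = ∑ j ∈ range N, ∑ p ∈ Finset.HasAntidiagonal.antidiagonal j,
          PowerSeries.coeff p.1 z * α ^ p.1 * (PowerSeries.coeff p.2 w * α ^ p.2) := by
        refine Finset.sum_congr rfl fun j hj => ?_
        rw [PowerSeries.coeff_mul, Finset.sum_mul]
        refine Finset.sum_congr rfl fun p hp => ?_
        have hpj : p.1 + p.2 = j := Finset.HasAntidiagonal.mem_antidiagonal.1 hp
        rw [← hpj, pow_add]; ring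
    _ = ∑ p ∈ (range N).biUnion Finset.HasAntidiagonal.antidiagonal,
          PowerSeries.coeff p.1 z * α ^ p.1 * (PowerSeries.coeff p.2 w * α ^ p.2) := by
        refine (Finset.sum_biUnion ?_).symm
        intro i _ j _ hij
        refine Finset.disjoint_left.2 fun p hp hq => hij ?_
        rw [← Finset.HasAntidiagonal.mem_antidiagonal.1 hp, ← Finset.HasAntidiagonal.mem_antidiagonal.1 hq]
    _ = ∑ p ∈ range N ×ˢ range N,
          PowerSeries.coeff p.1 z * α ^ p.1 * (PowerSeries.coeff p.2 w * α ^ p.2) := by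
        refine Finset.sum_subset ?_ ?_
        · intro p hp
          obtain ⟨j, hj, hpj⟩ := Finset.mem_biUnion.1 hp
          have := Finset.HasAntidiagonal.mem_antidiagonal.1 hpj
          simp only [Finset.mem_range] at hj
          simp only [Finset.mem_product, Finset.mem_range]
          omega
        · intro p hp hp'
          have hge : N ≤ p.1 + p.2 := by
            by_contra hlt
            exact hp' (Finset.mem_biUnion.2 ⟨p.1 + p.2, Finset.mem_range.2 (by omega),
              Finset.HasAntidiagonal.mem_antidiagonal.2 rfl⟩)
          have h0 : α ^ (p.1 + p.2) = 0 := pow_eq_zero_of_le hα hge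
          have : PowerSeries.coeff p.1 z * α ^ p.1 *
              (PowerSeries.coeff p.2 w * α ^ p.2) =
              PowerSeries.coeff p.1 z * PowerSeries.coeff p.2 w * α ^ (p.1 + p.2) := by
            rw [pow_add]; ring
          rw [this, h0, mul_zero]
    _ = ∑ a ∈ range N, ∑ b ∈ range N,
          PowerSeries.coeff a z * α ^ a * (PowerSeries.coeff b w * α ^ b) := by
        rw [Finset.sum_product]

lemma psEval_C (α : A) {N : ℕ} (hN : N ≠ 0) (a : A) : psEval α N (PowerSeries.C a) = a := by
  unfold psEval
  rw [Finset.sum_eq_single 0]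
  · simp
  · intro j _ hj
    rw [PowerSeries.coeff_C, if_neg hj, zero_mul]
  · intro h
    exact absurd (Finset.mem_range.2 (Nat.pos_of_ne_zero hN)) h

lemma psEval_X {α : A} {N : ℕ} (hα : α ^ N = 0) (hN : N ≠ 0) :
    psEval α N (PowerSeries.X : PowerSeries A) = α := by
  unfold psEval
  by_cases h1 : 1 < N
  · rw [Finset.sum_eq_single 1]
    · simp
    · intro j _ hj
      rw [PowerSeries.coeff_X, if_neg hj, zero_mul]
    · intro h
      exact absurd (Finset.mem_range.2 h1) h
  · have hN1 : N = 1 := by omega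
    subst hN1
    have hα0 : α = 0 := by simpa using hα
    simp [hα0]

/-- The evaluation ring homomorphism at a nilpotent element. -/
def psEvalHom (α : A) (N : ℕ) (hα : α ^ N = 0) (hN : N ≠ 0) : PowerSeries A →+* A where
  toFun := psEval α N
  map_one' := by
    unfold psEval
    rw [Finset.sum_eq_single 0]
    · simp
    · intro j _ hj
      rw [PowerSeries.coeff_one, if_neg hj, zero_mul]
    · intro h
      exact absurd (Finset.mem_range.2 (Nat.pos_of_ne_zero hN)) h
  map_mul' := psEval_mul hα
  map_zero' := by simp [psEval]
  map_add' := fun z w => by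
    simp [psEval, add_mul, Finset.sum_add_distrib]

lemma coeff_mul_right_mem {I : Ideal A} (w z : PowerSeries A)
    (hz : ∀ j, PowerSeries.coeff j z ∈ I) (j : ℕ) :
    PowerSeries.coeff j (w * z) ∈ I := by
  rw [PowerSeries.coeff_mul]
  exact Ideal.sum_mem _ fun p _ => Ideal.mul_mem_left _ _ (hz p.2)

end TestRingAux

open TestRingAux

/-- **Deformations over a test-ring (Grinberg–Kazhdan–Drinfeld example).**
Let `A` be a test-ring over `k` (local `k`-algebra with nilpotent maximal ideal and residue
field `k`), `f ∈ k[x_1,…,x_n]` with `f(0) = 0`, `α ∈ m_A`, `u ∈ A[[t]]ˣ` and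
`x_i(t) ∈ m_A[[t]]`.  Then there is at most one `y(t) ∈ m_A[[t]]` with
`y(t)·u(t)·(t − α) + f(x_1(t),…,x_n(t)) = 0`, and such `y(t)` exists if and only if
`f(x_1(α),…,x_n(α)) = 0`. -/
theorem test_ring_deformation_hypersurface
    {k : Type} [Field k]
    {A : Type} [CommRing A] [Algebra k A] [IsLocalRing A]
    (N : ℕ) (hN : (IsLocalRing.maximalIdeal A) ^ N = ⊥)
    (hres : Function.Bijective
      (fun c : k => IsLocalRing.residue A (algebraMap k A c)))
    {n : ℕ} (f : MvPolynomial (Fin n) k) (hf0 : MvPolynomial.constantCoeff f = 0)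
    (α : A) (hα : α ∈ IsLocalRing.maximalIdeal A)
    (u : PowerSeries A) (hu : IsUnit u)
    (x : Fin n → PowerSeries A)
    (hx : ∀ i j, PowerSeries.coeff j (x i) ∈ IsLocalRing.maximalIdeal A) :
    (∀ y₁ y₂ : PowerSeries A,
      (∀ j, PowerSeries.coeff j y₁ ∈ IsLocalRing.maximalIdeal A) →
      (∀ j, PowerSeries.coeff j y₂ ∈ IsLocalRing.maximalIdeal A) →
      y₁ * u * (PowerSeries.X - PowerSeries.C α) + MvPolynomial.aeval x f = 0 →
      y₂ * u * (PowerSeries.X - PowerSeries.C α) + MvPolynomial.aeval x f = 0 →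
      y₁ = y₂) ∧
    ((∃ y : PowerSeries A,
        (∀ j, PowerSeries.coeff j y ∈ IsLocalRing.maximalIdeal A) ∧
        y * u * (PowerSeries.X - PowerSeries.C α) + MvPolynomial.aeval x f = 0) ↔
      MvPolynomial.aeval
        (fun i => ∑ j ∈ Finset.range N, PowerSeries.coeff j (x i) * α ^ j) f = 0) := by
  have hNne : N ≠ 0 := by
    rintro rfl
    rw [pow_zero, Ideal.one_eq_top] at hN
    have h1 : (1 : A) ∈ (⊥ : Ideal A) := hN ▸ Submodule.mem_top
    exact one_ne_zero ((Submodule.mem_bot A).1 h1)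
  have hαN : α ^ N = 0 := by
    have : α ^ N ∈ (IsLocalRing.maximalIdeal A) ^ N := Ideal.pow_mem_pow hα N
    rw [hN] at this
    exact (Submodule.mem_bot A).1 this
  -- the evaluation algebra homomorphism
  let φ : PowerSeries A →ₐ[k] A :=
    { psEvalHom α N hαN hNne with
      commutes' := fun c => by
        show psEval α N (algebraMap k (PowerSeries A) c) = algebraMap k A c
        rw [PowerSeries.algebraMap_apply]
        exact psEval_C α hNne _ }
  have hφ : ∀ z : PowerSeries A, φ z = psEval α N z := fun _ => rfl
  have hφeq : (MvPolynomial.aeval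
      (fun i => ∑ j ∈ Finset.range N, PowerSeries.coeff j (x i) * α ^ j) f : A)
      = φ (MvPolynomial.aeval x f) := by
    rw [MvPolynomial.comp_aeval_apply]
    rfl
  -- regularity of X - C α
  have hreg : ∀ z : PowerSeries A,
      z * (PowerSeries.X - PowerSeries.C α) = 0 → z = 0 := by
    intro z hz
    have key : ∀ j, PowerSeries.coeff j z = α * PowerSeries.coeff (j + 1) z := by
      intro j
      have h := congrArg (PowerSeries.coeff (j + 1)) hz
      rw [mul_sub, map_sub, PowerSeries.coeff_succ_mul_X, PowerSeries.coeff_mul_C,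
        map_zero] at h
      have := sub_eq_zero.1 h
      rw [this, mul_comm]
    have key2 : ∀ M j, PowerSeries.coeff j z = α ^ M * PowerSeries.coeff (j + M) z := by
      intro M
      induction M with
      | zero => simp
      | succ M ih =>
        intro j
        rw [key j, ih (j + 1), show j + 1 + M = j + (M + 1) by omega, pow_succ]
        ring
    ext j
    rw [key2 N j, hαN, zero_mul, map_zero]
  constructor
  · -- uniqueness
    intro y₁ y₂ _ _ h1 h2
    have h3 : u * ((y₁ - y₂) * (PowerSeries.X - PowerSeries.C α)) = u * 0 := by
      rw [mul_zero]
      linear_combination h1 - h2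
    have h4 := hu.mul_left_cancel h3
    have h5 : y₁ - y₂ = 0 := hreg _ h4
    exact sub_eq_zero.1 h5
  · constructor
    · -- existence implies evaluation vanishes
      rintro ⟨y, _, heq⟩
      have h := congrArg φ heq
      rw [map_add, map_mul, map_mul, map_sub, map_zero] at h
      have hX : φ (PowerSeries.X : PowerSeries A) = α := psEval_X hαN hNne
      have hC : φ (PowerSeries.C α) = α := psEval_C α hNne α
      rw [hX, hC, sub_self, mul_zero, zero_add] at h
      rw [hφeq]
      exact h
    · -- evaluation vanishes implies existence
      intro h0
      have hevF : psEval α N (MvPolynomial.aeval x f : PowerSeries A) = 0 := by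
        rw [hφeq] at h0
        exact h0
      set F : PowerSeries A := MvPolynomial.aeval x f with hF
      -- coefficients of F lie in the maximal ideal
      have hFc : ∀ j, PowerSeries.coeff j F ∈ IsLocalRing.maximalIdeal A := by
        have hFsum : F = ∑ d ∈ f.support,
            (algebraMap k (PowerSeries A)) (MvPolynomial.coeff d f) *
              ∏ i ∈ d.support, x i ^ d i := by
          rw [hF, MvPolynomial.aeval_def, MvPolynomial.eval₂_eq]
        intro j
        rw [hFsum, map_sum]
        refine Ideal.sum_mem _ fun d hd => ?_
        have hd0 : d ≠ 0 := by
          rintro rfl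
          rw [MvPolynomial.mem_support_iff] at hd
          exact hd (by rw [← MvPolynomial.constantCoeff_eq] at *; exact hf0)
        obtain ⟨i₀, hi₀⟩ : ∃ i, d i ≠ 0 := by
          by_contra hc
          push_neg at hc
          exact hd0 (Finsupp.ext fun i => hc i)
        have hi₀mem : i₀ ∈ d.support := Finsupp.mem_support_iff.2 hi₀
        have hrw : (algebraMap k (PowerSeries A)) (MvPolynomial.coeff d f) *
            ∏ i ∈ d.support, x i ^ d i =
            ((algebraMap k (PowerSeries A)) (MvPolynomial.coeff d f) *
              (x i₀ ^ (d i₀ - 1) * ∏ i ∈ d.support.erase i₀, x i ^ d i)) * x i₀ := by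
          rw [← Finset.mul_prod_erase _ _ hi₀mem,
            show x i₀ ^ d i₀ = x i₀ ^ (d i₀ - 1 + 1) by
              rw [Nat.sub_add_cancel (Nat.one_le_iff_ne_zero.2 hi₀)],
            pow_succ]
          ring
        rw [hrw]
        exact coeff_mul_right_mem _ _ (hx i₀) j
      -- the quotient series G
      set G : PowerSeries A := PowerSeries.mk
        (fun j => ∑ m ∈ Finset.range N, α ^ m * PowerSeries.coeff (j + m + 1) F) with hG
      have hGc : ∀ j, PowerSeries.coeff j G ∈ IsLocalRing.maximalIdeal A := by
        intro j
        rw [hG, PowerSeries.coeff_mk]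
        exact Ideal.sum_mem _ fun m _ => Ideal.mul_mem_left _ _ (hFc _)
      have hgj : ∀ j, PowerSeries.coeff j G =
          ∑ m ∈ Finset.range N, α ^ m * PowerSeries.coeff (j + m + 1) F := by
        intro j; rw [hG, PowerSeries.coeff_mk]
      have hdiv : (PowerSeries.X - PowerSeries.C α) * G = F := by
        ext j
        cases j with
        | zero =>
          rw [sub_mul, map_sub]
          rw [show (PowerSeries.X * G : PowerSeries A) = G * PowerSeries.X from mul_comm _ _,
            show (PowerSeries.C α * G : PowerSeries A) = G * PowerSeries.C α from
              mul_comm _ _,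
            PowerSeries.coeff_zero_mul_X, PowerSeries.coeff_mul_C, hgj 0]
          have hS : ∑ j ∈ Finset.range (N + 1), PowerSeries.coeff j F * α ^ j = 0 := by
            rw [Finset.sum_range_succ, hαN, mul_zero, add_zero]
            exact hevF
          rw [Finset.sum_range_succ'] at hS
          -- hS : (∑ i ∈ range N, coeff (i+1) F * α^(i+1)) + coeff 0 F * α^0 = 0
          have : (∑ m ∈ Finset.range N, α ^ m * PowerSeries.coeff (0 + m + 1) F) * α
              = ∑ i ∈ Finset.range N, PowerSeries.coeff (i + 1) F * α ^ (i + 1) := by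
            rw [Finset.sum_mul]
            refine Finset.sum_congr rfl fun m _ => ?_
            rw [show (0 : ℕ) + m + 1 = m + 1 by omega, pow_succ]
            ring
          rw [this]
          simp only [pow_zero, mul_one] at hS
          linear_combination -hS
        | succ j =>
          rw [sub_mul, map_sub, PowerSeries.coeff_succ_X_mul,
            show (PowerSeries.C α * G : PowerSeries A) = G * PowerSeries.C α from
              mul_comm _ _,
            PowerSeries.coeff_mul_C, hgj j, hgj (j + 1)]
          have hT1 : ∑ m ∈ Finset.range (N + 1), α ^ m * PowerSeries.coeff (j + m + 1) F
              = ∑ m ∈ Finset.range N, α ^ m * PowerSeries.coeff (j + m + 1) F := by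
            rw [Finset.sum_range_succ, hαN, zero_mul, add_zero]
          have hT2 : ∑ m ∈ Finset.range (N + 1), α ^ m * PowerSeries.coeff (j + m + 1) F
              = (∑ m ∈ Finset.range N, α ^ m * PowerSeries.coeff (j + 1 + m + 1) F) * α
                + PowerSeries.coeff (j + 1) F := by
            rw [Finset.sum_range_succ', Finset.sum_mul]
            congr 1
            · refine Finset.sum_congr rfl fun m _ => ?_
              rw [show j + (m + 1) + 1 = j + 1 + m + 1 by omega, pow_succ]
              ring
            · rw [pow_zero, one_mul, show j + 0 + 1 = j + 1 by omega]
          rw [← hT1, hT2]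
          ring
      obtain ⟨v, hv⟩ := hu
      refine ⟨-(↑v⁻¹ * G), fun j => ?_, ?_⟩
      · rw [map_neg]
        exact neg_mem (coeff_mul_right_mem _ _ hGc j)
      · rw [← hv]
        have hvv : (↑v⁻¹ : PowerSeries A) * ↑v = 1 := v.inv_mul
        linear_combination (-(G * (PowerSeries.X - PowerSeries.C α))) * hvv - hdiv
end
end

section
/- Existence and uniqueness of formal power series solutions of explicit polynomial ODE systems: Let k be a field of characteristic 0, q, n ≥ 1, and P_1,…,P_n polynomials over k in the qn indeterminates z_{j,l} (1 ≤ j ≤ n, 0 ≤ l ≤ q−1). Then for every choice of initial data c_{j,l} ∈ k (1 ≤ j ≤ n, 0 ≤ l ≤ q−1) there exists a unique vector x = (x_1,…,x_n) ∈ k[[t]]^n such that D^q x_j = P_j(x_1,…,x_n, Dx_1,…,Dx_n, …, D^{q−1}x_1,…,D^{q−1}x_n) for all j, and the constant term of D^l x_j equals c_{j,l} for all 1 ≤ j ≤ n and 0 ≤ l ≤ q−1. -/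
/- Existence and uniqueness of formal power series solutions of explicit polynomial ODE
systems. -/

noncomputable section

/-- Formal differentiation on `k[[t]]`. -/
def D {k : Type} [Field k] : PowerSeries k → PowerSeries k :=
  fun a => PowerSeries.derivative k a

namespace ODEAux

open PowerSeries

variable {k : Type} [Field k]

lemma coeff_D (f : PowerSeries k) (d : ℕ) :
    coeff d (D f) = ((d : k) + 1) * coeff (d + 1) f := by
  rw [D, PowerSeries.coeff_derivative]; ring

lemma D_sub (f g : PowerSeries k) : D (f - g) = D f - D g := by
  simp [D, map_sub]

lemma D_iter_sub (l : ℕ) (f g : PowerSeries k) :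
    D^[l] (f - g) = D^[l] f - D^[l] g := by
  induction l generalizing f g with
  | zero => simp
  | succ l ih =>
      rw [Function.iterate_succ_apply', Function.iterate_succ_apply',
        Function.iterate_succ_apply', ih, D_sub]

lemma coeff_D_iter (l : ℕ) (f : PowerSeries k) (d : ℕ) :
    coeff d (D^[l] f) = ((d + l).descFactorial l : k) * coeff (d + l) f := by
  induction l generalizing f with
  | zero => simp
  | succ l ih =>
      rw [Function.iterate_succ_apply, ih, coeff_D]
      have h1 : d + (l + 1) = (d + l) + 1 := by ring
      rw [h1, Nat.succ_descFactorial_succ]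
      push_cast
      ring

lemma descFactorial_cast_ne_zero [CharZero k] {a b : ℕ} (h : b ≤ a) :
    ((a.descFactorial b : k)) ≠ 0 := by
  have : a.descFactorial b ≠ 0 := by
    intro h0
    exact absurd (Nat.descFactorial_eq_zero_iff_lt.mp h0) (not_lt.mpr h)
  exact_mod_cast this

lemma X_pow_dvd_sub_iff (m : ℕ) (f g : PowerSeries k) :
    (X : PowerSeries k) ^ m ∣ (f - g) ↔ ∀ i < m, coeff i f = coeff i g := by
  rw [PowerSeries.X_pow_dvd_iff]
  constructor
  · intro h i hi
    have := h i hi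
    rw [map_sub, sub_eq_zero] at this
    exact this
  · intro h i hi
    rw [map_sub, sub_eq_zero]
    exact h i hi

lemma X_pow_dvd_D (m : ℕ) (f : PowerSeries k) (h : (X : PowerSeries k) ^ (m + 1) ∣ f) :
    (X : PowerSeries k) ^ m ∣ D f := by
  rw [PowerSeries.X_pow_dvd_iff] at h ⊢
  intro i hi
  rw [coeff_D, h (i + 1) (by omega), mul_zero]

lemma X_pow_dvd_D_iter (m l : ℕ) (f : PowerSeries k) (h : (X : PowerSeries k) ^ m ∣ f) :
    (X : PowerSeries k) ^ (m - l) ∣ D^[l] f := by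
  induction l generalizing f with
  | zero => simpa using h
  | succ l ih =>
      have h1 : (X : PowerSeries k) ^ (m - l) ∣ D^[l] f := ih f h
      rw [Function.iterate_succ_apply']
      rcases Nat.eq_zero_or_pos (m - l) with h0 | h0
      · have : m - (l + 1) = 0 := by omega
        rw [this, pow_zero]
        exact one_dvd _
      · have h2 : m - l = (m - (l + 1)) + 1 := by omega
        rw [h2] at h1
        exact X_pow_dvd_D _ _ h1

lemma aeval_dvd_sub {σ : Type} (m : ℕ) (f g : σ → PowerSeries k)
    (h : ∀ v, (X : PowerSeries k) ^ m ∣ (f v - g v)) (P : MvPolynomial σ k) :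
    (X : PowerSeries k) ^ m ∣
      (MvPolynomial.aeval f P - MvPolynomial.aeval g P) := by
  induction P using MvPolynomial.induction_on with
  | C a => simp
  | add p r hp hr =>
      rw [map_add, map_add, add_sub_add_comm]
      exact dvd_add hp hr
  | mul_X p i hp =>
      rw [map_mul, map_mul, MvPolynomial.aeval_X, MvPolynomial.aeval_X]
      have hring : MvPolynomial.aeval f p * f i - MvPolynomial.aeval g p * g i
          = MvPolynomial.aeval f p * (f i - g i)
            + (MvPolynomial.aeval f p - MvPolynomial.aeval g p) * g i := by ring
      rw [hring]
      exact dvd_add (Dvd.dvd.mul_left (h i) _) (hp.mul_right _)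

variable (q n : ℕ) (P : Fin n → MvPolynomial (Fin n × Fin q) k)
  (c : Fin n × Fin q → k)

/-- The Picard-type iteration map whose fixed points are exactly the solutions. -/
def Phi (x : Fin n → PowerSeries k) : Fin n → PowerSeries k :=
  fun j => PowerSeries.mk fun m =>
    if h : m < q then c (j, ⟨m, h⟩) / (m.factorial : k)
    else ((m.descFactorial q : k))⁻¹ *
      coeff (m - q)
        (MvPolynomial.aeval (fun v : Fin n × Fin q => D^[(v.2 : ℕ)] (x v.1)) (P j))

lemma coeff_Phi_lt (x : Fin n → PowerSeries k) (j : Fin n) {m : ℕ} (h : m < q) :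
    coeff m (Phi q n P c x j) = c (j, ⟨m, h⟩) / (m.factorial : k) := by
  rw [Phi, PowerSeries.coeff_mk, dif_pos h]

lemma coeff_Phi_ge (x : Fin n → PowerSeries k) (j : Fin n) {m : ℕ} (h : ¬ m < q) :
    coeff m (Phi q n P c x j) = ((m.descFactorial q : k))⁻¹ *
      coeff (m - q)
        (MvPolynomial.aeval (fun v : Fin n × Fin q => D^[(v.2 : ℕ)] (x v.1)) (P j)) := by
  rw [Phi, PowerSeries.coeff_mk, dif_neg h]

/-- Solutions are exactly the fixed points of `Phi`. -/
lemma sol_iff_fixed [CharZero k] (x : Fin n → PowerSeries k) :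
    ((∀ j, D^[q] (x j) =
        MvPolynomial.aeval (fun v : Fin n × Fin q => D^[(v.2 : ℕ)] (x v.1)) (P j)) ∧
      (∀ (j : Fin n) (l : Fin q),
        PowerSeries.constantCoeff (D^[(l : ℕ)] (x j)) = c (j, l)))
    ↔ Phi q n P c x = x := by
  constructor
  · rintro ⟨hode, hic⟩
    funext j
    ext m
    by_cases h : m < q
    · rw [coeff_Phi_lt q n P c x j h]
      have h1 := hic j ⟨m, h⟩
      rw [← PowerSeries.coeff_zero_eq_constantCoeff_apply, coeff_D_iter] at h1
      simp only [Nat.zero_add, Nat.descFactorial_self, Fin.val_mk] at h1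
      have hfac : ((m.factorial : k)) ≠ 0 := by exact_mod_cast m.factorial_ne_zero
      rw [div_eq_iff hfac, ← h1]
      ring
    · rw [coeff_Phi_ge q n P c x j h, ← hode j, coeff_D_iter]
      have h2 : m - q + q = m := by omega
      rw [h2, ← mul_assoc, inv_mul_cancel₀ (descFactorial_cast_ne_zero (by omega)),
        one_mul]
  · intro hfix
    constructor
    · intro j
      ext d
      have h1 : coeff (d + q) (x j) = coeff (d + q) (Phi q n P c x j) := by
        rw [hfix]
      rw [coeff_Phi_ge q n P c x j (by omega)] at h1
      have h2 : d + q - q = d := by omega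
      rw [h2] at h1
      rw [coeff_D_iter, h1, ← mul_assoc,
        mul_inv_cancel₀ (descFactorial_cast_ne_zero (by omega)), one_mul]
    · intro j l
      have h1 : coeff (l : ℕ) (x j) = coeff (l : ℕ) (Phi q n P c x j) := by
        rw [hfix]
      rw [coeff_Phi_lt q n P c x j l.isLt] at h1
      rw [← PowerSeries.coeff_zero_eq_constantCoeff_apply, coeff_D_iter]
      simp only [Nat.zero_add, Nat.descFactorial_self]
      rw [h1]
      have hfac : ((l : ℕ).factorial : k) ≠ 0 := by
        exact_mod_cast (l : ℕ).factorial_ne_zero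
      field_simp

/-- `Phi` is a strict contraction for the `X`-adic filtration. -/
lemma Phi_contract (hq : 1 ≤ q) (x y : Fin n → PowerSeries k) (m : ℕ)
    (h : ∀ j, (X : PowerSeries k) ^ m ∣ (x j - y j)) (j : Fin n) :
    (X : PowerSeries k) ^ (m + 1) ∣ (Phi q n P c x j - Phi q n P c y j) := by
  rw [X_pow_dvd_sub_iff]
  intro i hi
  by_cases hiq : i < q
  · rw [coeff_Phi_lt q n P c x j hiq, coeff_Phi_lt q n P c y j hiq]
  · rw [coeff_Phi_ge q n P c x j hiq, coeff_Phi_ge q n P c y j hiq]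
    have hdvd : (X : PowerSeries k) ^ (m - (q - 1)) ∣
        (MvPolynomial.aeval (fun v : Fin n × Fin q => D^[(v.2 : ℕ)] (x v.1)) (P j)
          - MvPolynomial.aeval (fun v : Fin n × Fin q => D^[(v.2 : ℕ)] (y v.1)) (P j)) := by
      apply aeval_dvd_sub
      intro v
      rw [← D_iter_sub]
      have h1 : (X : PowerSeries k) ^ (m - (v.2 : ℕ)) ∣ D^[(v.2 : ℕ)] (x v.1 - y v.1) :=
        X_pow_dvd_D_iter m _ _ (h v.1)
      exact dvd_trans (pow_dvd_pow _ (by omega : m - (q - 1) ≤ m - (v.2 : ℕ))) h1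
    rw [X_pow_dvd_sub_iff] at hdvd
    rw [hdvd (i - q) (by omega)]

lemma Phi_iter_contract (hq : 1 ≤ q) (m : ℕ) (x y : Fin n → PowerSeries k) (j : Fin n) :
    (X : PowerSeries k) ^ m ∣ ((Phi q n P c)^[m] x j - (Phi q n P c)^[m] y j) := by
  induction m generalizing x y j with
  | zero => rw [pow_zero]; exact one_dvd _
  | succ m ih =>
      rw [Function.iterate_succ_apply', Function.iterate_succ_apply']
      exact Phi_contract q n P c hq _ _ m (fun j' => ih x y j') j

end ODEAux

/-- **Formal solutions of explicit polynomial ODE systems.**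
Let `P_1,…,P_n` be polynomials in the `qn` indeterminates `z_{j,l}` (`1 ≤ j ≤ n`,
`0 ≤ l ≤ q−1`).  For every choice of initial data `c_{j,l} ∈ k` there is a unique
`x = (x_1,…,x_n) ∈ k[[t]]^n` with
`D^q x_j = P_j(x, Dx, …, D^{q−1}x)` for all `j` and `(D^l x_j)(0) = c_{j,l}`. -/
theorem polynomial_ODE_unique_solution
    {k : Type} [Field k] [CharZero k] (q n : ℕ) (hq : 1 ≤ q) (hn : 1 ≤ n)
    (P : Fin n → MvPolynomial (Fin n × Fin q) k)
    (c : Fin n × Fin q → k) :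
    ∃! x : Fin n → PowerSeries k,
      (∀ j, D^[q] (x j) =
        MvPolynomial.aeval (fun v : Fin n × Fin q => D^[(v.2 : ℕ)] (x v.1)) (P j)) ∧
      (∀ (j : Fin n) (l : Fin q),
        PowerSeries.constantCoeff (D^[(l : ℕ)] (x j)) = c (j, l)) := by
  classical
  open ODEAux PowerSeries in
  -- the candidate solution: the "limit" of the Picard iterates starting from `0`
  set Φ := Phi q n P c with hΦ
  set xsol : Fin n → PowerSeries k :=
    fun j => PowerSeries.mk fun m => coeff m (Φ^[m + 1] (fun _ => 0) j) with hxsol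
  -- stabilization of coefficients of iterates
  have stab : ∀ (m N : ℕ), m + 1 ≤ N → ∀ j,
      coeff m (Φ^[N] (fun _ => 0) j) = coeff m (Φ^[m + 1] (fun _ => 0) j) := by
    intro m N hN j
    have hsplit : Φ^[N] (fun _ => 0) = Φ^[m + 1] (Φ^[N - (m + 1)] (fun _ => 0)) := by
      rw [← Function.iterate_add_apply]
      congr 1
      omega
    rw [hsplit]
    have hdvd := Phi_iter_contract q n P c hq (m + 1)
      (Φ^[N - (m + 1)] (fun _ => 0)) (fun _ => 0) j
    rw [X_pow_dvd_sub_iff] at hdvd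
    exact hdvd m (by omega)
  -- xsol agrees with the m-th iterate below degree m
  have xsol_close : ∀ (m : ℕ) (j : Fin n),
      (PowerSeries.X : PowerSeries k) ^ m ∣ (xsol j - Φ^[m] (fun _ => 0) j) := by
    intro m j
    rw [X_pow_dvd_sub_iff]
    intro i hi
    rw [hxsol]
    simp only [PowerSeries.coeff_mk]
    exact (stab i m (by omega) j).symm
  -- xsol is a fixed point of Φ
  have hfix : Φ xsol = xsol := by
    funext j
    ext m
    have h1 := Phi_contract q n P c hq xsol (Φ^[m] (fun _ => 0)) m
      (fun j' => xsol_close m j') j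
    rw [X_pow_dvd_sub_iff] at h1
    have h2 := h1 m (by omega)
    have h3 : PowerSeries.coeff m (Φ (Φ^[m] (fun _ => 0)) j)
        = PowerSeries.coeff m (Φ^[m + 1] (fun _ => 0) j) := by
      rw [Function.iterate_succ_apply']
    have h4 : PowerSeries.coeff m (Φ^[m + 1] (fun _ => 0) j)
        = PowerSeries.coeff m (xsol j) := by
      rw [hxsol]
      simp only [PowerSeries.coeff_mk]
    exact h2.trans (h3.trans h4)
  refine ⟨xsol, (sol_iff_fixed q n P c xsol).mpr hfix, ?_⟩
  intro y hy
  have hyfix : Φ y = y := (sol_iff_fixed q n P c y).mp hy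
  funext j
  ext i
  have hdvd := Phi_iter_contract q n P c hq (i + 1) y xsol j
  rw [Function.iterate_fixed hyfix, Function.iterate_fixed hfix,
    X_pow_dvd_sub_iff] at hdvd
  exact hdvd i (by omega)

end
end

section
/- Wavrik's approximation theorem in one variable: Let k be a field of characteristic 0 and F ∈ k[x,y] an irreducible polynomial in two variables. Then for every integer q > 0 there exists an integer N such that: whenever ȳ ∈ k[[x]] satisfies F(x, ȳ) ≡ 0 mod (x)^N, there exists y(x) ∈ k[[x]] with F(x, y(x)) = 0 and y(x) ≡ ȳ mod (x)^q. -/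
/- Wavrik's approximation theorem in one variable. -/

noncomputable section

open PowerSeries Polynomial

namespace WavrikAux

variable {k : Type} [Field k]

lemma order_neg' (f : PowerSeries k) : (-f).order = f.order := by
  have h : (-f) = (-1 : PowerSeries k) * f := by ring
  rw [h, PowerSeries.order_mul, PowerSeries.order_zero_of_unit (isUnit_one (M:=PowerSeries k)).neg, zero_add]

lemma le_order_of_dvd {c d : PowerSeries k} (h : c ∣ d) : c.order ≤ d.order := by
  obtain ⟨e, rfl⟩ := h
  calc c.order ≤ c.order + e.order := le_self_add
    _ ≤ (c * e).order := PowerSeries.le_order_mul _ _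

lemma dvd_of_order_le {c d : PowerSeries k} (hc : c ≠ 0) (h : c.order ≤ d.order) : c ∣ d := by
  rcases eq_or_ne d 0 with rfl | hd
  · exact dvd_zero c
  have hcf : c.order < ⊤ := PowerSeries.order_finite_iff_ne_zero.2 hc
  have hdf : d.order < ⊤ := PowerSeries.order_finite_iff_ne_zero.2 hd
  have h1 : c ∣ (PowerSeries.X : PowerSeries k) ^ (c.order.lift hcf) := by
    refine ⟨Inv_divided_by_X_pow_order hc, ?_⟩
    have key := congrArg (fun t => t * Inv_divided_by_X_pow_order hc)
      (X_pow_order_mul_divXPowOrder (f := c))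
    simp only [mul_assoc, Inv_divided_by_X_pow_order_rightInv hc, mul_one] at key
    rw [ENat.lift_eq_toNat_of_lt_top]; exact key
  have h2 : (PowerSeries.X : PowerSeries k) ^ (c.order.lift hcf) ∣ (PowerSeries.X : PowerSeries k) ^ (d.order.lift hdf) := by
    apply pow_dvd_pow
    have : ((c.order.lift hcf : ℕ) : ℕ∞) ≤ ((d.order.lift hdf : ℕ) : ℕ∞) := by
      rwa [ENat.coe_lift, ENat.coe_lift]
    exact_mod_cast this
  exact h1.trans (h2.trans (by rw [ENat.lift_eq_toNat_of_lt_top]; exact PowerSeries.X_pow_order_dvd))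

end WavrikAux

namespace WavrikAux

variable {k : Type} [Field k]

def newtonStep (f : Polynomial (PowerSeries k)) (z : PowerSeries k) : PowerSeries k :=
  letI := Classical.propDecidable ((Polynomial.derivative f).eval z ∣ f.eval z)
  if h : (Polynomial.derivative f).eval z ∣ f.eval z then z + -h.choose else z

lemma newton (f : Polynomial (PowerSeries k)) (a : PowerSeries k) (γ m : ℕ)
    (hγ : ((Polynomial.derivative f).eval a).order = (γ : ℕ∞))
    (hm : (m : ℕ∞) ≤ (f.eval a).order) (hgap : 2 * γ + 1 ≤ m) :
    ∃ y : PowerSeries k, f.eval y = 0 ∧ ((m - γ : ℕ) : ℕ∞) ≤ (y - a).order := by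
  set δ := m - γ with hδdef
  have hδγ : δ + γ = m := by omega
  have hγδ : γ < δ := by omega
  set Y : ℕ → PowerSeries k := fun n => (newtonStep f)^[n] a with hYdef
  have hY0 : Y 0 = a := rfl
  have hYs : ∀ n, Y (n+1) = newtonStep f (Y n) := fun n => Function.iterate_succ_apply' _ _ _
  have step : ∀ n, (δ : ℕ∞) ≤ (Y n - a).order →
      ((m + n : ℕ) : ℕ∞) ≤ (Polynomial.eval (Y n) f).order →
      ((Polynomial.derivative f).eval (Y n)).order = (γ : ℕ∞) →
      ((δ : ℕ∞) ≤ (Y (n+1) - a).order ∧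
        ((m + (n+1) : ℕ) : ℕ∞) ≤ (Polynomial.eval (Y (n+1)) f).order ∧
        ((Polynomial.derivative f).eval (Y (n+1))).order = (γ : ℕ∞)) ∧
      ((δ + n : ℕ) : ℕ∞) ≤ (Y (n+1) - Y n).order := by
    intro n h1 h2 h3
    set c := (Polynomial.derivative f).eval (Y n) with hcdef
    have hcne : c ≠ 0 := by
      intro h0
      rw [h0, PowerSeries.order_zero] at h3
      exact (ENat.top_ne_coe γ) h3
    have hdvd : c ∣ Polynomial.eval (Y n) f := by
      apply dvd_of_order_le hcne
      rw [h3]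
      exact le_trans (by exact_mod_cast (by omega : γ ≤ m + n)) h2
    have hstep : Y (n+1) = Y n + -(hdvd.choose) := by
      rw [hYs]
      unfold newtonStep
      rw [dif_pos hdvd]
    set w := hdvd.choose with hwdef
    have hw : Polynomial.eval (Y n) f = c * w := hdvd.choose_spec
    have how : ((δ + n : ℕ) : ℕ∞) ≤ w.order := by
      have h4 : ((m + n : ℕ) : ℕ∞) ≤ (γ : ℕ∞) + w.order := by
        rw [← h3, ← PowerSeries.order_mul, ← hw]; exact h2
      have h5 : (γ : ℕ∞) + ((δ + n : ℕ) : ℕ∞) ≤ (γ : ℕ∞) + w.order := by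
        refine le_trans (le_of_eq ?_) h4
        rw [← Nat.cast_add]
        congr 1
        omega
      exact (WithTop.add_le_add_iff_left (by simp : (γ : ℕ∞) ≠ ⊤)).mp h5
    have hdiffb : ((δ + n : ℕ) : ℕ∞) ≤ (Y (n+1) - Y n).order := by
      have : Y (n+1) - Y n = -w := by rw [hstep]; ring
      rw [this, order_neg']; exact how
    have hP1 : (δ : ℕ∞) ≤ (Y (n+1) - a).order := by
      have heq : Y (n+1) - a = (Y n - a) + (Y (n+1) - Y n) := by ring
      rw [heq]
      refine le_trans (le_min h1 ?_) (PowerSeries.min_order_le_order_add _ _)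
      exact le_trans (by exact_mod_cast (by omega : δ ≤ δ + n)) hdiffb
    have hP2 : ((m + (n+1) : ℕ) : ℕ∞) ≤ (Polynomial.eval (Y (n+1)) f).order := by
      obtain ⟨K, hK⟩ := f.binomExpansion (Y n) (-w)
      have heval : Polynomial.eval (Y (n+1)) f = K * (w * w) := by
        rw [hstep, hK, hw, ← hcdef]; ring
      rw [heval]
      calc ((m + (n+1) : ℕ) : ℕ∞) ≤ ((δ + n : ℕ) : ℕ∞) + ((δ + n : ℕ) : ℕ∞) := by
            rw [← Nat.cast_add]; exact_mod_cast (by omega : m + (n+1) ≤ (δ + n) + (δ + n))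
        _ ≤ w.order + w.order := add_le_add how how
        _ ≤ (w * w).order := PowerSeries.le_order_mul _ _
        _ ≤ K.order + (w * w).order := le_add_self
        _ ≤ (K * (w * w)).order := PowerSeries.le_order_mul _ _
    have hP3 : ((Polynomial.derivative f).eval (Y (n+1))).order = (γ : ℕ∞) := by
      have hdvd2 : (Y (n+1) - a) ∣
          ((Polynomial.derivative f).eval (Y (n+1)) - (Polynomial.derivative f).eval a) := by
        simpa using Polynomial.sub_dvd_eval_sub (Y (n+1)) a (Polynomial.derivative f)
      have hdiford : (δ : ℕ∞) ≤
          ((Polynomial.derivative f).eval (Y (n+1)) - (Polynomial.derivative f).eval a).order :=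
        le_trans hP1 (le_order_of_dvd hdvd2)
      have hne : ((Polynomial.derivative f).eval a).order ≠
          ((Polynomial.derivative f).eval (Y (n+1)) - (Polynomial.derivative f).eval a).order := by
        rw [hγ]
        exact ne_of_lt (lt_of_lt_of_le (by exact_mod_cast hγδ) hdiford)
      have heq : (Polynomial.derivative f).eval (Y (n+1)) = (Polynomial.derivative f).eval a +
          ((Polynomial.derivative f).eval (Y (n+1)) - (Polynomial.derivative f).eval a) := by ring
      nth_rewrite 1 [heq]
      rw [PowerSeries.order_add_of_order_ne _ _ hne, hγ]
      exact min_eq_left (le_of_lt (lt_of_lt_of_le (by exact_mod_cast hγδ) hdiford))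
    exact ⟨⟨hP1, hP2, hP3⟩, hdiffb⟩
  have main : ∀ n, (δ : ℕ∞) ≤ (Y n - a).order ∧
      ((m + n : ℕ) : ℕ∞) ≤ (Polynomial.eval (Y n) f).order ∧
      ((Polynomial.derivative f).eval (Y n)).order = (γ : ℕ∞) := by
    intro n
    induction n with
    | zero =>
      refine ⟨by simp [hY0], by simpa [hY0] using hm, by rw [hY0]; exact hγ⟩
    | succ n ih => exact (step n ih.1 ih.2.1 ih.2.2).1
  have diffb : ∀ n, ((δ + n : ℕ) : ℕ∞) ≤ (Y (n+1) - Y n).order := fun n =>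
    (step n (main n).1 (main n).2.1 (main n).2.2).2
  have tele : ∀ j n, j ≤ n → ((δ + j : ℕ) : ℕ∞) ≤ (Y n - Y j).order := by
    intro j n
    induction n with
    | zero =>
      intro hj
      interval_cases j
      simp
    | succ n ih =>
      intro hj
      rcases Nat.lt_or_ge j (n+1) with h | h
      · have hjn : j ≤ n := by omega
        have heq : Y (n+1) - Y j = (Y (n+1) - Y n) + (Y n - Y j) := by ring
        rw [heq]
        refine le_trans (le_min ?_ (ih hjn)) (PowerSeries.min_order_le_order_add _ _)
        exact le_trans (by exact_mod_cast (by omega : δ + j ≤ δ + n)) (diffb n)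
      · have : j = n + 1 := by omega
        subst this
        simp
  set y : PowerSeries k := PowerSeries.mk (fun i => PowerSeries.coeff i (Y (i+1))) with hydef
  have hyn : ∀ n, ((δ + n : ℕ) : ℕ∞) ≤ (y - Y n).order := by
    intro n
    apply PowerSeries.nat_le_order
    intro i hi
    have hcy : PowerSeries.coeff i y = PowerSeries.coeff i (Y (i+1)) := by
      rw [hydef, PowerSeries.coeff_mk]
    rw [map_sub, hcy]
    rcases le_total n (i+1) with h | h
    · have h2 := tele n (i+1) h
      have hlt : (i : ℕ∞) < (Y (i+1) - Y n).order :=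
        lt_of_lt_of_le (by exact_mod_cast hi) h2
      have h3 := PowerSeries.coeff_of_lt_order i hlt
      rw [map_sub] at h3
      exact h3
    · have h2 := tele (i+1) n h
      have hlt : (i : ℕ∞) < (Y n - Y (i+1)).order :=
        lt_of_lt_of_le (by exact_mod_cast (by omega : i < δ + (i+1))) h2
      have h3 := PowerSeries.coeff_of_lt_order i hlt
      rw [map_sub] at h3
      have h4 := sub_eq_zero.mp h3
      rw [← h4]
      exact sub_self _
  have hfy : ∀ n : ℕ, (n : ℕ∞) ≤ (Polynomial.eval y f).order := by
    intro n
    have h1 : (n : ℕ∞) ≤ (Polynomial.eval (Y n) f).order :=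
      le_trans (by exact_mod_cast (by omega : n ≤ m + n)) (main n).2.1
    have h2 : (n : ℕ∞) ≤ (Polynomial.eval y f - Polynomial.eval (Y n) f).order := by
      refine le_trans (by exact_mod_cast (by omega : n ≤ δ + n)) (le_trans (hyn n) ?_)
      exact le_order_of_dvd (by simpa using Polynomial.sub_dvd_eval_sub y (Y n) f)
    have heq : Polynomial.eval y f =
        Polynomial.eval (Y n) f + (Polynomial.eval y f - Polynomial.eval (Y n) f) := by ring
    rw [heq]
    exact le_trans (le_min h1 h2) (PowerSeries.min_order_le_order_add _ _)
  have htop : (Polynomial.eval y f).order = ⊤ := by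
    by_contra hne
    have hlt : (Polynomial.eval y f).order < ⊤ := lt_top_iff_ne_top.mpr hne
    set t := (Polynomial.eval y f).order.lift hlt with htdef
    have h5 := hfy (t+1)
    have h6 : ((Polynomial.eval y f).order) = (t : ℕ∞) := (ENat.coe_lift _ _).symm
    rw [h6] at h5
    exact absurd (by exact_mod_cast h5 : t + 1 ≤ t) (by omega)
  refine ⟨y, PowerSeries.order_eq_top.mp htop, ?_⟩
  have := hyn 0
  simpa [hY0] using this

end WavrikAux


namespace WavrikAux
variable {k : Type} [Field k]

def E (k : Type) [Field k] : MvPolynomial (Fin 2) k ≃ₐ[k] Polynomial (Polynomial k) :=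
  (MvPolynomial.renameEquiv k (Equiv.swap (0 : Fin 2) 1)).trans
    ((MvPolynomial.finSuccEquiv k 1).trans
      (Polynomial.mapAlgEquiv
        ((MvPolynomial.finSuccEquiv k 0).trans
          (Polynomial.mapAlgEquiv (MvPolynomial.isEmptyAlgEquiv k (Fin 0))))))

lemma E_X0 : E k (MvPolynomial.X 0) = Polynomial.C Polynomial.X := by
  have h1 : (MvPolynomial.X 1 : MvPolynomial (Fin 2) k) = MvPolynomial.X (Fin.succ 0) := rfl
  simp [E, Equiv.swap_apply_left, h1, MvPolynomial.finSuccEquiv_X_succ,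
    MvPolynomial.finSuccEquiv_X_zero]

lemma E_X1 : E k (MvPolynomial.X 1) = Polynomial.X := by
  simp [E, Equiv.swap_apply_right, MvPolynomial.finSuccEquiv_X_zero]

end WavrikAux

namespace WavrikAux
variable {k : Type} [Field k]

lemma eval_E (F : MvPolynomial (Fin 2) k) (y : PowerSeries k) :
    Polynomial.eval y (Polynomial.map Polynomial.coeToPowerSeries.ringHom (E k F)) =
      MvPolynomial.aeval ![PowerSeries.X, y] F := by
  induction F using MvPolynomial.induction_on with
  | C r =>
    have h1 : E k (MvPolynomial.C r) = Polynomial.C (Polynomial.C r) := by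
      have := (E k).commutes r
      simpa [MvPolynomial.algebraMap_eq] using this
    simp [h1, Polynomial.coe_C, PowerSeries.algebraMap_apply]
  | add p q hp hq =>
    simp [map_add, hp, hq]
  | mul_X p i hp =>
    rw [map_mul, Polynomial.map_mul, Polynomial.eval_mul, hp, map_mul]
    congr 1
    match i with
    | 0 => simp [E_X0, Polynomial.coe_X]
    | 1 => simp [E_X1, Polynomial.coe_X]

end WavrikAux


/-- **Wavrik's approximation theorem in one variable.**
Let `F ∈ k[x,y]` be irreducible.  For every `q > 0` there is an `N` such that any
`ȳ ∈ k[[x]]` with `F(x,ȳ) ≡ 0 mod (x)^N` can be approximated to order `q` by an exact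
solution: there is `y(x) ∈ k[[x]]` with `F(x,y(x)) = 0` and `y(x) ≡ ȳ mod (x)^q`. -/
theorem wavrik_approximation_one_variable
    {k : Type} [Field k] [CharZero k]
    (F : MvPolynomial (Fin 2) k) (hF : Irreducible F) (q : ℕ) (hq : 0 < q) :
    ∃ N : ℕ, ∀ ybar : PowerSeries k,
      (N : ℕ∞) ≤ PowerSeries.order (MvPolynomial.aeval ![PowerSeries.X, ybar] F) →
      ∃ y : PowerSeries k,
        MvPolynomial.aeval ![PowerSeries.X, y] F = 0 ∧
        (q : ℕ∞) ≤ PowerSeries.order (y - ybar) := by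
  classical
  set φ : Polynomial k →+* PowerSeries k := Polynomial.coeToPowerSeries.ringHom with hφdef
  set f0 : Polynomial (Polynomial k) := WavrikAux.E k F with hf0def
  have hF0 : Irreducible f0 := by
    have := (MulEquiv.irreducible_iff (WavrikAux.E k).toRingEquiv (x := F)).mpr hF
    exact this
  set g : Polynomial (PowerSeries k) := f0.map φ with hgdef
  have heval : ∀ y : PowerSeries k, g.eval y = MvPolynomial.aeval ![PowerSeries.X, y] F :=
    fun y => WavrikAux.eval_E F y
  rcases Nat.eq_zero_or_pos f0.natDegree with h0 | hd
  · -- degenerate case: F does not involve y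
    have hp : f0 = Polynomial.C (f0.coeff 0) := Polynomial.eq_C_of_natDegree_eq_zero h0
    have hne : f0.coeff 0 ≠ 0 := by
      intro h
      rw [h, map_zero] at hp
      exact hF0.ne_zero hp
    have hφne : φ (f0.coeff 0) ≠ 0 := by
      have : ((f0.coeff 0 : Polynomial k) : PowerSeries k) ≠ 0 := by
        simpa [Polynomial.coe_eq_zero_iff] using hne
      simpa [hφdef, Polynomial.coeToPowerSeries.ringHom_apply] using this
    have hof : (φ (f0.coeff 0)).order < ⊤ := PowerSeries.order_finite_iff_ne_zero.2 hφne
    set t := (φ (f0.coeff 0)).order.lift hof with htdef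
    have ht : (φ (f0.coeff 0)).order = (t : ℕ∞) := (ENat.coe_lift _ _).symm
    refine ⟨t + 1, fun ybar hyb => absurd ?_ (by omega : ¬ (t + 1 ≤ t))⟩
    rw [← heval ybar] at hyb
    have hgy : g.eval ybar = φ (f0.coeff 0) := by
      rw [hgdef]
      conv_lhs => rw [hp]
      simp
    rw [hgy, ht] at hyb
    exact_mod_cast hyb
  · -- main case
    set K := FractionRing (Polynomial k) with hKdef
    set ψ : Polynomial k →+* K := algebraMap (Polynomial k) K with hψdef
    haveI : CharZero K := charZero_of_injective_algebraMap (IsFractionRing.injective (Polynomial k) K)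
    have hprim : f0.IsPrimitive := by
      intro r hr
      obtain ⟨w, hw⟩ := hr
      rcases hF0.isUnit_or_isUnit hw with h | h
      · exact Polynomial.isUnit_C.mp h
      · exfalso
        have h1 : f0.natDegree ≤ (Polynomial.C r).natDegree + w.natDegree := by
          rw [hw]; exact Polynomial.natDegree_mul_le
        rw [Polynomial.natDegree_C, Polynomial.natDegree_eq_zero_of_isUnit h] at h1
        omega
    have hirrK : Irreducible (f0.map ψ) :=
      hprim.irreducible_iff_irreducible_map_fraction_map.mp hF0
    have hsep : IsCoprime (f0.map ψ) (Polynomial.derivative (f0.map ψ)) := hirrK.separable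
    obtain ⟨A, B, hAB⟩ := hsep
    obtain ⟨a, ha⟩ := IsLocalization.integerNormalization_map_to_map
      (nonZeroDivisors (Polynomial k)) A
    obtain ⟨b, hb⟩ := IsLocalization.integerNormalization_map_to_map
      (nonZeroDivisors (Polynomial k)) B
    have ha' : (IsLocalization.integerNormalization (nonZeroDivisors (Polynomial k)) A).map ψ
        = Polynomial.C (ψ (a : Polynomial k)) * A := by
      rw [ha, Algebra.smul_def, Polynomial.algebraMap_apply]
    have hb' : (IsLocalization.integerNormalization (nonZeroDivisors (Polynomial k)) B).map ψ
        = Polynomial.C (ψ (b : Polynomial k)) * B := by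
      rw [hb, Algebra.smul_def, Polynomial.algebraMap_apply]
    set u : Polynomial (Polynomial k) :=
      Polynomial.C (b : Polynomial k) * IsLocalization.integerNormalization (nonZeroDivisors (Polynomial k)) A with hudef
    set v : Polynomial (Polynomial k) :=
      Polynomial.C (a : Polynomial k) * IsLocalization.integerNormalization (nonZeroDivisors (Polynomial k)) B with hvdef
    set D : Polynomial k := (a : Polynomial k) * b with hDdef
    have hid : u * f0 + v * Polynomial.derivative f0 = Polynomial.C D := by
      apply Polynomial.map_injective ψ (IsFractionRing.injective (Polynomial k) K)
      simp only [hudef, hvdef, hDdef, Polynomial.map_add, Polynomial.map_mul, Polynomial.map_C,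
        ha', hb', map_mul, Polynomial.C_mul]
      rw [← Polynomial.derivative_map]
      linear_combination (Polynomial.C (ψ (a : Polynomial k)) * Polynomial.C (ψ (b : Polynomial k))) * hAB
    have hid2 : ∀ yb : PowerSeries k,
        (u.map φ).eval yb * g.eval yb + (v.map φ).eval yb * (Polynomial.derivative g).eval yb
          = φ D := by
      intro yb
      have h5 := congrArg (fun p => Polynomial.eval yb (Polynomial.map φ p)) hid
      simpa [Polynomial.map_add, Polynomial.map_mul, Polynomial.eval_add, Polynomial.eval_mul,
        Polynomial.derivative_map, Polynomial.map_C, Polynomial.eval_C, hgdef] using h5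
    have hD : φ D ≠ 0 := by
      have hDne : D ≠ 0 :=
        mul_ne_zero (nonZeroDivisors.coe_ne_zero a) (nonZeroDivisors.coe_ne_zero b)
      have : ((D : Polynomial k) : PowerSeries k) ≠ 0 := by
        simpa [Polynomial.coe_eq_zero_iff] using hDne
      simpa [hφdef, Polynomial.coeToPowerSeries.ringHom_apply] using this
    have hDf : (φ D).order < ⊤ := PowerSeries.order_finite_iff_ne_zero.2 hD
    set e := (φ D).order.lift hDf with hedef
    have he : (φ D).order = (e : ℕ∞) := (ENat.coe_lift _ _).symm
    refine ⟨2 * e + q + 1, fun ybar hyb => ?_⟩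
    rw [← heval ybar] at hyb
    set c : PowerSeries k := (Polynomial.derivative g).eval ybar with hcdef
    set U : PowerSeries k := (u.map φ).eval ybar with hUdef
    set V : PowerSeries k := (v.map φ).eval ybar with hVdef
    have hVc : (V * c).order = (e : ℕ∞) := by
      have h6 : V * c = φ D + -(U * g.eval ybar) := by
        have := hid2 ybar
        rw [← hUdef, ← hVdef, ← hcdef] at this
        linear_combination this
      have horder : (φ D).order < (-(U * g.eval ybar)).order := by
        rw [WavrikAux.order_neg', he]
        calc (e : ℕ∞) < ((2 * e + q + 1 : ℕ) : ℕ∞) := by exact_mod_cast (by omega : e < 2 * e + q + 1)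
          _ ≤ (g.eval ybar).order := hyb
          _ ≤ (U * g.eval ybar).order := WavrikAux.le_order_of_dvd (dvd_mul_left _ _)
      rw [h6, PowerSeries.order_add_of_order_ne _ _ (ne_of_lt horder), he,
        inf_eq_left.mpr (le_of_lt (he ▸ horder))]
    have hcne : c ≠ 0 := by
      intro h
      rw [h, mul_zero, PowerSeries.order_zero] at hVc
      exact (ENat.top_ne_coe e) hVc
    have hcle : c.order ≤ (e : ℕ∞) := by
      rw [← hVc, PowerSeries.order_mul]
      exact le_add_self
    have hcf : c.order < ⊤ := lt_of_le_of_lt hcle (by simp)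
    set γ := c.order.lift hcf with hγdef
    have hγ : c.order = (γ : ℕ∞) := (ENat.coe_lift _ _).symm
    have hγe : γ ≤ e := by
      rw [hγ] at hcle
      exact_mod_cast hcle
    obtain ⟨y, hy0, hyq⟩ := WavrikAux.newton g ybar γ (2 * e + q + 1) hγ hyb (by omega)
    refine ⟨y, by rw [← heval y]; exact hy0, le_trans ?_ hyq⟩
    exact_mod_cast (by omega : q ≤ 2 * e + q + 1 - γ)
end
end
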